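/- arXiv:1111.3073 — 5 statements merged into one kernel-verified Lean document; each statement's English description precedes it below -/
import Mathlib

section
/- A random variable Y is measurable with respect to G^τ_t = F_t ∨ σ(τ) if and only if there exists an F_t ⊗ B(ℝ⁺)-measurable function y_t(ω, u) such that Y(ω) = y_t(ω, τ(ω)). -/
open MeasureTheory Filter Set
open scoped NNReal ENNReal

/-- Every simple function measurable w.r.t. a comap σ-algebra factors through the map. -/
lemma simpleFunc_factors {α E : Type*} {m : MeasurableSpace E} (φ : α → E)
    (f : @SimpleFunc α (m.comap φ) ℝ) :
    ∃ g : E → ℝ, Measurable[m] g ∧ ∀ a, f a = g (φ a) := by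
  induction f using SimpleFunc.induction with
  | const c hs =>
    rename_i s
    obtain ⟨B, hB, rfl⟩ := hs
    refine ⟨B.indicator (fun _ => c), Measurable.indicator measurable_const hB, fun a => ?_⟩
    classical
    simp [SimpleFunc.piecewise_apply, Set.indicator_apply, Set.mem_preimage]
    rfl
  | add hfg h₁ h₂ =>
    obtain ⟨g₁, hg₁, hfg₁⟩ := h₁
    obtain ⟨g₂, hg₂, hfg₂⟩ := h₂
    exact ⟨g₁ + g₂, hg₁.add hg₂, fun a => by simp [hfg₁ a, hfg₂ a]⟩

/-- Doob–Dynkin type factorization: a real-valued function measurable with respect to a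
comap σ-algebra factors as a measurable function of the map. -/
lemma measurable_comap_factors {α E : Type*} {m : MeasurableSpace E} (φ : α → E)
    {Y : α → ℝ} (hY : Measurable[m.comap φ] Y) :
    ∃ y : E → ℝ, Measurable[m] y ∧ ∀ a, Y a = y (φ a) := by
  have hSM : @StronglyMeasurable α ℝ _ (m.comap φ) Y := hY.stronglyMeasurable
  set f : ℕ → @SimpleFunc α (m.comap φ) ℝ := hSM.approx with hf
  choose g hg hfg using fun n => simpleFunc_factors φ (f n)
  refine ⟨fun e => (liminf (fun n => ((g n e : ℝ) : EReal)) atTop).toReal, ?_, fun a => ?_⟩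
  · exact (Measurable.liminf fun n =>
      (measurable_coe_real_ereal).comp (hg n)).ereal_toReal
  · have htendsto : Tendsto (fun n => f n a) atTop (nhds (Y a)) := hSM.tendsto_approx a
    have h2 : Tendsto (fun n => ((g n (φ a) : ℝ) : EReal)) atTop (nhds ((Y a : ℝ) : EReal)) := by
      have : Tendsto (fun n => g n (φ a)) atTop (nhds (Y a)) := by
        simpa [fun n => hfg n a] using htendsto
      exact (continuous_coe_real_ereal.tendsto _).comp this
    show Y a = (liminf (fun n => ((g n (φ a) : ℝ) : EReal)) atTop).toReal
    rw [h2.liminf_eq]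
    simp

/-- A random variable `Y` is `G^τ_t = F_t ∨ σ(τ)`-measurable iff
`Y ω = y_t(ω, τ ω)` for some `F_t ⊗ B(ℝ⁺)`-measurable function `y_t`. -/
theorem stmt1 {Ω : Type*} {mΩ : MeasurableSpace Ω}
    (F : Filtration ℝ≥0 mΩ) (τ : Ω → ℝ≥0) (hτ : Measurable τ)
    (t : ℝ≥0) (Y : Ω → ℝ) :
    Measurable[F t ⊔ MeasurableSpace.comap τ inferInstance] Y ↔
      ∃ y : Ω × ℝ≥0 → ℝ, Measurable[(F t).prod inferInstance] y ∧
        ∀ ω, Y ω = y (ω, τ ω) := by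
  have key : (F t ⊔ MeasurableSpace.comap τ inferInstance)
      = ((F t).prod inferInstance).comap (fun ω => (ω, τ ω)) := by
    rw [MeasurableSpace.prod, MeasurableSpace.comap_sup, MeasurableSpace.comap_comp,
      MeasurableSpace.comap_comp]
    congr 1
    exact (MeasurableSpace.comap_id (m := F t)).symm
  constructor
  · intro hY
    rw [key] at hY
    obtain ⟨y, hy, hfac⟩ := measurable_comap_factors (fun ω => (ω, τ ω)) hY
    exact ⟨y, hy, hfac⟩
  · rintro ⟨y, hy, hfac⟩
    have : Y = y ∘ (fun ω => (ω, τ ω)) := funext hfac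
    rw [this, key]
    exact hy.comp (comap_measurable _)
end

section
/- A random variable Y is measurable with respect to the progressively enlarged σ-field G_t if and only if Y(ω) = ỹ_t(ω) 1_{t < τ(ω)} + ŷ_t(ω, τ(ω)) 1_{τ(ω) ≤ t}, for some F_t-measurable random variable ỹ_t and some F_t ⊗ B(ℝ⁺)-measurable family ŷ_t(·, u), u ≤ t. -/
open MeasureTheory Filter Set
open scoped NNReal ENNReal

section Aux

variable {α β : Type*}

/-- Doob–Dynkin factorization for `ℝ≥0∞`-valued functions. -/
lemma stmt2_factor_ennreal {m : MeasurableSpace β} {Φ : α → β} {f : α → ℝ≥0∞}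
    (hf : Measurable[m.comap Φ] f) :
    ∃ g : β → ℝ≥0∞, Measurable[m] g ∧ ∀ a, f a = g (Φ a) := by
  refine @Measurable.ennreal_induction α (m.comap Φ)
    (fun f => ∃ g : β → ℝ≥0∞, Measurable[m] g ∧ ∀ a, f a = g (Φ a)) ?_ ?_ ?_ f hf
  · rintro c s ⟨B, hB, rfl⟩
    refine ⟨B.indicator fun _ => c, measurable_const.indicator hB, fun a => ?_⟩
    by_cases h : Φ a ∈ B <;> simp [Set.indicator, h, Set.mem_preimage]
  · rintro f₁ f₂ - - - ⟨g₁, hg₁, h₁⟩ ⟨g₂, hg₂, h₂⟩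
    exact ⟨g₁ + g₂, hg₁.add hg₂, fun a => by simp [h₁ a, h₂ a]⟩
  · rintro f hfm - hP
    choose g hg h using hP
    exact ⟨fun b => ⨆ n, g n b, Measurable.iSup hg, fun a => by simp [fun n => h n a]⟩

/-- Doob–Dynkin factorization for real-valued functions. -/
lemma stmt2_factor_real {m : MeasurableSpace β} {Φ : α → β} {f : α → ℝ}
    (hf : Measurable[m.comap Φ] f) :
    ∃ g : β → ℝ, Measurable[m] g ∧ ∀ a, f a = g (Φ a) := by
  obtain ⟨g₁, hg₁, h₁⟩ := stmt2_factor_ennreal (m := m) (Φ := Φ)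
    (f := fun a => ENNReal.ofReal (f a)) (ENNReal.measurable_ofReal.comp hf)
  obtain ⟨g₂, hg₂, h₂⟩ := stmt2_factor_ennreal (m := m) (Φ := Φ)
    (f := fun a => ENNReal.ofReal (-(f a))) (ENNReal.measurable_ofReal.comp hf.neg)
  refine ⟨fun b => (g₁ b).toReal - (g₂ b).toReal,
    (ENNReal.measurable_toReal.comp hg₁).sub (ENNReal.measurable_toReal.comp hg₂), fun a => ?_⟩
  show f a = (g₁ (Φ a)).toReal - (g₂ (Φ a)).toReal
  rw [← h₁ a, ← h₂ a]
  rcases le_total 0 (f a) with h | h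
  · rw [ENNReal.toReal_ofReal h, ENNReal.ofReal_of_nonpos (by linarith)]
    simp
  · rw [ENNReal.ofReal_of_nonpos h, ENNReal.toReal_ofReal (by linarith : (0:ℝ) ≤ -(f a))]
    simp

/-- The progressively enlarged σ-algebra is the comap of `ω ↦ (ω, σ ω)` where
`σ ω = τ ω` if `τ ω ≤ t` and `σ ω = t + 1` otherwise. -/
lemma stmt2_key {Ω : Type*} (F' : MeasurableSpace Ω) (τ : Ω → ℝ≥0) (t : ℝ≥0) :
    (F' ⊔ ⨆ s ∈ Set.Iic t,
        MeasurableSpace.comap (fun ω => if τ ω ≤ s then (1 : ℝ) else 0) inferInstance)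
      = MeasurableSpace.comap (fun ω => (ω, if τ ω ≤ t then τ ω else t + 1))
          (F'.prod inferInstance) := by
  have hH : (⨆ s ∈ Set.Iic t,
      MeasurableSpace.comap (fun ω => if τ ω ≤ s then (1 : ℝ) else 0)
        (inferInstance : MeasurableSpace ℝ)) =
      MeasurableSpace.comap (fun ω => if τ ω ≤ t then τ ω else t + 1)
        (inferInstance : MeasurableSpace ℝ≥0) := by
    apply le_antisymm
    · refine iSup₂_le fun s hs => ?_
      have hfun : (fun ω => if τ ω ≤ s then (1 : ℝ) else 0)
          = (fun u : ℝ≥0 => if u ≤ s then (1 : ℝ) else 0) ∘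
            (fun ω => if τ ω ≤ t then τ ω else t + 1) := by
        funext ω
        by_cases h : τ ω ≤ t
        · simp [h]
        · have h1 : ¬ τ ω ≤ s := fun hc => h (hc.trans hs)
          have h2 : ¬ (t + 1 : ℝ≥0) ≤ s := by
            intro hc
            have : (t + 1 : ℝ≥0) ≤ t := hc.trans hs
            simpa using this
          simp [h, h1, h2]
      rw [hfun, ← MeasurableSpace.comap_comp]
      refine MeasurableSpace.comap_mono ?_
      refine Measurable.comap_le ?_
      exact Measurable.ite measurableSet_Iic measurable_const measurable_const
    · refine Measurable.comap_le ?_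
      apply measurable_of_Iic
      intro c
      have hset : ∀ s, s ≤ t → MeasurableSet[⨆ s ∈ Set.Iic t,
          MeasurableSpace.comap (fun ω => if τ ω ≤ s then (1 : ℝ) else 0)
            (inferInstance : MeasurableSpace ℝ)] {ω | τ ω ≤ s} := by
        intro s hs
        have hEq : {ω | τ ω ≤ s}
            = (fun ω => if τ ω ≤ s then (1 : ℝ) else 0) ⁻¹' {1} := by
          ext ω
          by_cases h : τ ω ≤ s <;> simp [h]
        rw [hEq]
        exact le_iSup₂ (f := fun s (_ : s ∈ Set.Iic t) =>
            MeasurableSpace.comap (fun ω => if τ ω ≤ s then (1 : ℝ) else 0)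
              (inferInstance : MeasurableSpace ℝ)) s hs
          _ ⟨{1}, measurableSet_singleton 1, rfl⟩
      by_cases hc : t + 1 ≤ c
      · have hEq : (fun ω => if τ ω ≤ t then τ ω else t + 1) ⁻¹' Set.Iic c = Set.univ := by
          refine Set.eq_univ_of_forall fun ω => ?_
          by_cases h : τ ω ≤ t
          · have : τ ω ≤ c := h.trans ((le_self_add).trans hc)
            simp [h, this]
          · simp [h, hc]
        rw [hEq]
        exact MeasurableSet.univ
      · have hEq : (fun ω => if τ ω ≤ t then τ ω else t + 1) ⁻¹' Set.Iic c
            = {ω | τ ω ≤ min c t} := by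
          ext ω
          simp only [Set.mem_preimage, Set.mem_Iic, Set.mem_setOf_eq, le_min_iff]
          constructor
          · intro h
            by_cases h' : τ ω ≤ t
            · rw [if_pos h'] at h
              exact ⟨h, h'⟩
            · rw [if_neg h'] at h
              exact absurd h hc
          · rintro ⟨h1, h2⟩
            rw [if_pos h2]
            exact h1
        rw [hEq]
        exact hset _ (min_le_right c t)
  rw [hH]
  have hprod : (F'.prod (inferInstance : MeasurableSpace ℝ≥0))
      = MeasurableSpace.comap Prod.fst F' ⊔
        MeasurableSpace.comap Prod.snd (inferInstance : MeasurableSpace ℝ≥0) := rfl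
  rw [hprod, MeasurableSpace.comap_sup, MeasurableSpace.comap_comp,
    MeasurableSpace.comap_comp]
  congr 1
  · exact (MeasurableSpace.comap_id).symm

end Aux

/-- A random variable `Y` is measurable w.r.t. the progressively enlarged
σ-field `G_t = F_t ∨ H_t`, where `H_t = σ(1_{τ ≤ s}, s ≤ t)`, iff
`Y ω = ỹ_t(ω) 1_{t < τ(ω)} + ŷ_t(ω, τ(ω)) 1_{τ(ω) ≤ t}` for some `F_t`-measurable `ỹ_t`
and some `F_t ⊗ B(ℝ⁺)`-measurable family `ŷ_t`. -/
theorem stmt2 {Ω : Type*} {mΩ : MeasurableSpace Ω}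
    (F : Filtration ℝ≥0 mΩ) (τ : Ω → ℝ≥0) (hτ : Measurable τ)
    (t : ℝ≥0) (Y : Ω → ℝ) :
    Measurable[F t ⊔ ⨆ s ∈ Set.Iic t,
        MeasurableSpace.comap (fun ω => if τ ω ≤ s then (1 : ℝ) else 0) inferInstance] Y ↔
      ∃ (yt : Ω → ℝ) (yh : Ω × ℝ≥0 → ℝ),
        Measurable[F t] yt ∧ Measurable[(F t).prod inferInstance] yh ∧
        ∀ ω, Y ω = if t < τ ω then yt ω else yh (ω, τ ω) := by
  rw [stmt2_key (F t) τ t]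
  constructor
  · intro hY
    obtain ⟨g, hg, h⟩ := stmt2_factor_real hY
    refine ⟨fun ω => g (ω, t + 1), g, ?_, hg, fun ω => ?_⟩
    · have hmap : @Measurable Ω (Ω × ℝ≥0) (F t) ((F t).prod inferInstance)
          (fun ω => (ω, (t + 1 : ℝ≥0))) := by
        letI : MeasurableSpace Ω := F t
        exact measurable_id.prodMk measurable_const
      exact hg.comp hmap
    · rw [h ω]
      by_cases hω : τ ω ≤ t
      · rw [if_neg (not_lt.2 hω)]
        simp [hω]
      · rw [if_pos (lt_of_not_ge hω)]
        simp [hω]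
  · rintro ⟨yt, yh, hyt, hyh, hω⟩
    classical
    set g : Ω × ℝ≥0 → ℝ := fun p => if p.2 ≤ t then yh p else yt p.1 with hgdef
    have hg : Measurable[(F t).prod inferInstance] g := by
      letI : MeasurableSpace Ω := F t
      exact Measurable.ite (measurable_snd measurableSet_Iic) hyh (hyt.comp measurable_fst)
    have hYeq : Y = fun ω => g (ω, if τ ω ≤ t then τ ω else t + 1) := by
      funext ω
      rw [hω ω]
      by_cases h : τ ω ≤ t
      · rw [if_neg (not_lt.2 h), if_pos h, hgdef]
        simp [h]
      · rw [if_pos (lt_of_not_ge h), if_neg h, hgdef]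
        have : ¬ (t + 1 : ℝ≥0) ≤ t := by simp
        simp [this]
    rw [hYeq]
    exact hg.comp (comap_measurable _)
end

section
/- Under P*, where τ is independent of F_∞ and P* = P on each F_t, one has for s ≤ t and y_t(τ) a P*-integrable G^τ_t-measurable random variable: E*(y_t(τ) | G^τ_s) = E*(y_t(u) | F_s)|_{u = τ} = E(y_t(u) | F_s)|_{u = τ}, P-almost surely. -/
open MeasureTheory Filter Set
open scoped NNReal ENNReal

section Stmt4Aux

variable {Ω : Type*}

lemma stmt4_prod_mono {β : Type*} {m m' : MeasurableSpace Ω} (mb : MeasurableSpace β)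
    (h : m ≤ m') : m.prod mb ≤ m'.prod mb :=
  sup_le_sup (MeasurableSpace.comap_mono h) le_rfl

lemma stmt4_trim_eq {m : MeasurableSpace Ω} {m0 : MeasurableSpace Ω} (hm : m ≤ m0) {μ μs : Measure Ω}
    (hagree : ∀ E, MeasurableSet[m] E → μs E = μ E) : μ.trim hm = μs.trim hm := by
  refine @Measure.ext Ω m _ _ fun E hE => ?_
  rw [trim_measurableSet_eq hm hE, trim_measurableSet_eq hm hE, hagree E hE]

lemma stmt4_lint_agree {m : MeasurableSpace Ω} {m0 : MeasurableSpace Ω} (hm : m ≤ m0) {μ μs : Measure Ω}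
    (hagree : ∀ E, MeasurableSet[m] E → μs E = μ E) {f : Ω → ℝ≥0∞} (hf : Measurable[m] f)
    {A : Set Ω} (hA : MeasurableSet[m] A) :
    ∫⁻ ω in A, f ω ∂μ = ∫⁻ ω in A, f ω ∂μs := by
  have h0 : μ.trim hm = μs.trim hm := stmt4_trim_eq hm hagree
  calc ∫⁻ ω in A, f ω ∂μ = ∫⁻ ω, f ω ∂((μ.restrict A).trim hm) := (lintegral_trim hm hf).symm
    _ = ∫⁻ ω, f ω ∂((μ.trim hm).restrict A) := by rw [restrict_trim hm μ hA]
    _ = ∫⁻ ω, f ω ∂((μs.trim hm).restrict A) := by rw [h0]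
    _ = ∫⁻ ω, f ω ∂((μs.restrict A).trim hm) := by rw [restrict_trim hm μs hA]
    _ = ∫⁻ ω in A, f ω ∂μs := lintegral_trim hm hf

lemma stmt4_ae_le_one {m : MeasurableSpace Ω} {m0 : MeasurableSpace Ω} (hm : m ≤ m0) {μ : Measure Ω}
    [IsFiniteMeasure μ] {h : Ω → ℝ≥0∞} (hmeas : Measurable[m] h)
    (hle : ∀ A, MeasurableSet[m] A → ∫⁻ ω in A, h ω ∂μ ≤ μ A) :
    ∀ᵐ ω ∂μ, h ω ≤ 1 := by
  have hn : ∀ n : ℕ, μ {ω | 1 + ((n : ℝ≥0∞) + 1)⁻¹ ≤ h ω} = 0 := by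
    intro n
    set c : ℝ≥0∞ := 1 + ((n : ℝ≥0∞) + 1)⁻¹ with hc
    set A : Set Ω := {ω | c ≤ h ω} with hA
    have hAm : MeasurableSet[m] A := hmeas measurableSet_Ici
    have h1 : c * μ A ≤ μ A := by
      calc c * μ A = ∫⁻ _ in A, c ∂μ := (setLIntegral_const A c).symm
        _ ≤ ∫⁻ ω in A, h ω ∂μ :=
          setLIntegral_mono (hmeas.mono hm le_rfl) fun ω hω => hω
        _ ≤ μ A := hle A hAm
    by_contra h0
    have hcle : c ≤ 1 := by
      rw [← ENNReal.mul_le_mul_iff_left h0 (measure_ne_top μ A), one_mul]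
      exact h1
    have hclt : (1 : ℝ≥0∞) < c := by
      refine ENNReal.lt_add_right ENNReal.one_ne_top ?_
      simp [ENNReal.inv_ne_zero]
    exact absurd hcle (not_le.mpr hclt)
  rw [ae_iff]
  refine measure_mono_null (fun ω hω => ?_) <|
    (measure_iUnion_null_iff).mpr hn
  simp only [not_le, mem_setOf_eq] at hω
  simp only [mem_iUnion, mem_setOf_eq]
  rcases eq_or_ne (h ω) ∞ with hinf | hfin
  · exact ⟨0, by rw [hinf]; exact le_top⟩
  · have hpos : h ω - 1 ≠ 0 := (tsub_pos_of_lt hω).ne'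
    obtain ⟨n, hn'⟩ := ENNReal.exists_inv_nat_lt hpos
    refine ⟨n, ?_⟩
    have h2 : ((n : ℝ≥0∞) + 1)⁻¹ ≤ (n : ℝ≥0∞)⁻¹ :=
      ENNReal.inv_le_inv.mpr (le_self_add)
    calc 1 + ((n : ℝ≥0∞) + 1)⁻¹ ≤ 1 + (h ω - 1) := by
          exact add_le_add_right (le_of_lt (lt_of_le_of_lt h2 hn')) 1
      _ = h ω := add_tsub_cancel_of_le hω.le

lemma stmt4_map_pair {mt : MeasurableSpace Ω} {m0 : MeasurableSpace Ω} (hmt : mt ≤ m0)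
    (μs : Measure Ω) [IsProbabilityMeasure μs] (τ : Ω → ℝ≥0) (hτ : Measurable τ)
    (hindep : ProbabilityTheory.Indep (MeasurableSpace.comap τ inferInstance) mt μs) :
    ∀ D : Set (Ω × ℝ≥0), MeasurableSet[mt.prod inferInstance] D →
      Measurable (fun u => μs ((fun ω => (ω, u)) ⁻¹' D)) ∧
      μs ((fun ω => (ω, τ ω)) ⁻¹' D)
        = ∫⁻ u, μs ((fun ω => (ω, u)) ⁻¹' D) ∂(Measure.map τ μs) := by
  classical
  have hmul := (ProbabilityTheory.Indep_iff _ _ μs).1 hindep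
  haveI : IsProbabilityMeasure (Measure.map τ μs) := Measure.isProbabilityMeasure_map hτ.aemeasurable
  have hT : @Measurable Ω (Ω × ℝ≥0) m0 (mt.prod inferInstance) (fun ω => (ω, τ ω)) :=
    Measurable.prod (measurable_id'' hmt) hτ
  have hmk : ∀ u : ℝ≥0, @Measurable Ω (Ω × ℝ≥0) mt (mt.prod inferInstance) (fun ω => (ω, u)) :=
    fun u => Measurable.prod measurable_id measurable_const
  intro D hD
  refine @MeasurableSpace.induction_on_inter (Ω × ℝ≥0) (mt.prod inferInstance)
    (fun D _ => Measurable (fun u => μs ((fun ω => (ω, u)) ⁻¹' D)) ∧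
      μs ((fun ω => (ω, τ ω)) ⁻¹' D)
        = ∫⁻ u, μs ((fun ω => (ω, u)) ⁻¹' D) ∂(Measure.map τ μs)) _
    (@generateFrom_prod Ω ℝ≥0 mt _).symm
    (@isPiSystem_prod Ω ℝ≥0 mt _) ?_ ?_ ?_ ?_ D hD
  · simp
  · rintro _ ⟨A, hA, B, hB, rfl⟩
    simp only [mem_setOf_eq] at hA hB
    have hslice : ∀ u : ℝ≥0, ((fun ω => (ω, u)) ⁻¹' (A ×ˢ B)) = if u ∈ B then A else ∅ := by
      intro u; ext ω; by_cases hu : u ∈ B <;> simp [hu]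
    have hTpre : ((fun ω => (ω, τ ω)) ⁻¹' (A ×ˢ B)) = τ ⁻¹' B ∩ A := by
      ext ω; simp [and_comm]
    constructor
    · simp only [hslice, apply_ite μs, measure_empty]
      exact Measurable.ite hB measurable_const measurable_const
    · rw [hTpre, hmul _ _ ⟨B, hB, rfl⟩ hA]
      have : (fun u => μs ((fun ω => (ω, u)) ⁻¹' (A ×ˢ B)))
          = fun u => B.indicator (fun _ => μs A) u := by
        funext u
        by_cases hu : u ∈ B <;> simp [hslice, hu]
      rw [this, lintegral_indicator_const hB, Measure.map_apply hτ hB, mul_comm]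
  · rintro D hDm ⟨hmeas, heq⟩
    have hsliceD : ∀ u : ℝ≥0, MeasurableSet ((fun ω => (ω, u)) ⁻¹' D) :=
      fun u => hmt _ (hmk u hDm)
    have hTD : MeasurableSet ((fun ω => (ω, τ ω)) ⁻¹' D) := hT hDm
    constructor
    · have : (fun u => μs ((fun ω => (ω, u)) ⁻¹' Dᶜ))
          = fun u => 1 - μs ((fun ω => (ω, u)) ⁻¹' D) := by
        funext u
        rw [preimage_compl, prob_compl_eq_one_sub (hsliceD u)]
      rw [this]
      exact measurable_const.sub hmeas
    · have h1 : ((fun ω => (ω, τ ω)) ⁻¹' Dᶜ) = ((fun ω => (ω, τ ω)) ⁻¹' D)ᶜ := rfl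
      rw [h1, prob_compl_eq_one_sub hTD, heq]
      have h2 : (fun u => μs ((fun ω => (ω, u)) ⁻¹' Dᶜ))
          = fun u => 1 - μs ((fun ω => (ω, u)) ⁻¹' D) := by
        funext u
        rw [preimage_compl, prob_compl_eq_one_sub (hsliceD u)]
      rw [h2, lintegral_sub hmeas]
      · simp
      · exact ne_top_of_le_ne_top ENNReal.one_ne_top (by
          calc ∫⁻ u, μs ((fun ω => (ω, u)) ⁻¹' D) ∂(Measure.map τ μs)
              ≤ ∫⁻ _, 1 ∂(Measure.map τ μs) := lintegral_mono fun u => prob_le_one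
            _ = 1 := by simp)
      · exact Filter.Eventually.of_forall fun u => prob_le_one
  · intro f hdis hfm hP
    have hsl : ∀ (u : ℝ≥0) i, MeasurableSet ((fun ω => (ω, u)) ⁻¹' f i) :=
      fun u i => hmt _ (hmk u (hfm i))
    constructor
    · have : (fun u => μs ((fun ω => (ω, u)) ⁻¹' ⋃ i, f i))
          = fun u => ∑' i, μs ((fun ω => (ω, u)) ⁻¹' f i) := by
        funext u
        rw [preimage_iUnion, measure_iUnion (fun i j hij => (hdis hij).preimage _) (hsl u)]
      rw [this]
      exact Measurable.ennreal_tsum fun i => (hP i).1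
    · rw [preimage_iUnion, measure_iUnion (fun i j hij => (hdis hij).preimage _)
        (fun i => hT (hfm i))]
      have : ∀ u : ℝ≥0, μs ((fun ω => (ω, u)) ⁻¹' ⋃ i, f i)
          = ∑' i, μs ((fun ω => (ω, u)) ⁻¹' f i) := by
        intro u
        rw [preimage_iUnion, measure_iUnion (fun i j hij => (hdis hij).preimage _) (hsl u)]
      calc ∑' i, μs ((fun ω => (ω, τ ω)) ⁻¹' f i)
          = ∑' i, ∫⁻ u, μs ((fun ω => (ω, u)) ⁻¹' f i) ∂(Measure.map τ μs) :=
            tsum_congr fun i => (hP i).2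
        _ = ∫⁻ u, ∑' i, μs ((fun ω => (ω, u)) ⁻¹' f i) ∂(Measure.map τ μs) :=
            (lintegral_tsum fun i => (hP i).1.aemeasurable).symm
        _ = ∫⁻ u, μs ((fun ω => (ω, u)) ⁻¹' ⋃ i, f i) ∂(Measure.map τ μs) := by
            simp_rw [this]

lemma stmt4_tsum_induction {γ : Type*} {m : MeasurableSpace γ} {P : (γ → ℝ≥0∞) → Prop}
    (h_ind : ∀ (c : ℝ≥0∞) (S : Set γ), MeasurableSet[m] S → P (S.indicator fun _ => c))
    (h_tsum : ∀ f : ℕ → γ → ℝ≥0∞, (∀ n, Measurable[m] (f n)) → (∀ n, P (f n)) →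
      P fun x => ∑' n, f n x) :
    ∀ f : γ → ℝ≥0∞, Measurable[m] f → P f := by
  classical
  letI : MeasurableSpace γ := m
  have h0 : P (fun _ => (0 : ℝ≥0∞)) := by
    have := h_ind 0 ∅ MeasurableSet.empty
    simpa using this
  have h_add : ∀ f g : γ → ℝ≥0∞, Measurable f → Measurable g → P f → P g →
      P (fun x => f x + g x) := by
    intro f g hfm hgm hPf hPg
    have key := h_tsum (fun n => if n = 0 then f else if n = 1 then g else fun _ => 0)
      (by intro n; (try dsimp only); split_ifs <;>
        first | exact hfm | exact hgm | exact measurable_const)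
      (by intro n; (try dsimp only); split_ifs <;> first | exact hPf | exact hPg | exact h0)
    have heq : (fun x => ∑' n, (if n = 0 then f else if n = 1 then g else fun _ => 0) x)
        = fun x => f x + g x := by
      funext x
      rw [tsum_eq_sum (s := ({0, 1} : Finset ℕ)) ?_]
      · simp
      · intro b hb
        simp only [Finset.mem_insert, Finset.mem_singleton, not_or] at hb
        simp [hb.1, hb.2]
    rwa [heq] at key
  have hsimple : ∀ s : SimpleFunc γ ℝ≥0, P (fun x => ((s x : ℝ≥0) : ℝ≥0∞)) := by
    intro s
    refine SimpleFunc.induction (motive := fun s : SimpleFunc γ ℝ≥0 =>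
      P (fun x => ((s x : ℝ≥0) : ℝ≥0∞))) ?_ ?_ s
    · intro c S hS
      have h1 : (fun x => (((SimpleFunc.piecewise S hS (SimpleFunc.const γ c)
          (SimpleFunc.const γ 0)) x : ℝ≥0) : ℝ≥0∞)) = S.indicator fun _ => (c : ℝ≥0∞) := by
        funext x
        by_cases hx : x ∈ S <;>
          simp [SimpleFunc.piecewise_apply, hx, Set.indicator_apply]
      rw [h1]
      exact h_ind _ _ hS
    · intro f' g' _ hPf hPg
      have h1 : (fun x => (((f' + g') x : ℝ≥0) : ℝ≥0∞))
          = fun x => ((f' x : ℝ≥0∞)) + ((g' x : ℝ≥0∞)) := by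
        funext x; simp
      rw [h1]
      exact h_add _ _ f'.measurable.coe_nnreal_ennreal g'.measurable.coe_nnreal_ennreal hPf hPg
  intro f hf
  have hfeq : f = fun x => ∑' n, ((SimpleFunc.eapproxDiff f n x : ℝ≥0) : ℝ≥0∞) :=
    funext fun x => (SimpleFunc.tsum_eapproxDiff f hf x).symm
  rw [hfeq]
  exact h_tsum _ (fun n => (SimpleFunc.eapproxDiff f n).measurable.coe_nnreal_ennreal)
    (fun n => hsimple _)

lemma stmt4_integral_toReal_sub {α : Type*} {m : MeasurableSpace α} {ρ : Measure α}
    {a b : α → ℝ≥0∞} (ha : AEMeasurable a ρ) (hb : AEMeasurable b ρ)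
    (hafin : ∫⁻ x, a x ∂ρ ≠ ∞) (hbfin : ∫⁻ x, b x ∂ρ ≠ ∞) :
    ∫ x, ((a x).toReal - (b x).toReal) ∂ρ
      = (∫⁻ x, a x ∂ρ).toReal - (∫⁻ x, b x ∂ρ).toReal := by
  rw [integral_sub (integrable_toReal_of_lintegral_ne_top ha hafin)
      (integrable_toReal_of_lintegral_ne_top hb hbfin),
    integral_toReal ha (ae_lt_top' ha hafin), integral_toReal hb (ae_lt_top' hb hbfin)]

lemma stmt4_setIntegral_ext {m : MeasurableSpace Ω} {m0 : MeasurableSpace Ω} (hm : m ≤ m0) {μ : Measure Ω}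
    [IsFiniteMeasure μ] {p : Set (Set Ω)} (hgen : m = MeasurableSpace.generateFrom p)
    (hpi : IsPiSystem p) (huniv : Set.univ ∈ p)
    {f g : Ω → ℝ} (hf : Integrable f μ) (hg : Integrable g μ)
    (heq : ∀ C ∈ p, ∫ ω in C, f ω ∂μ = ∫ ω in C, g ω ∂μ) :
    ∀ C, MeasurableSet[m] C → ∫ ω in C, f ω ∂μ = ∫ ω in C, g ω ∂μ := by
  have huniv' : ∫ ω, f ω ∂μ = ∫ ω, g ω ∂μ := by
    have := heq _ huniv
    simpa using this
  intro C hC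
  refine @MeasurableSpace.induction_on_inter Ω m
    (fun C _ => ∫ ω in C, f ω ∂μ = ∫ ω in C, g ω ∂μ) p hgen hpi ?_ heq ?_ ?_ C hC
  · simp
  · intro E hE hEeq
    have hE0 : MeasurableSet E := hm _ hE
    have h1 := integral_add_compl hE0 hf
    have h2 := integral_add_compl hE0 hg
    have := huniv'
    linarith
  · intro fs hdisj hmeas hP
    have hm0 : ∀ i, MeasurableSet (fs i) := fun i => hm _ (hmeas i)
    rw [integral_iUnion hm0 hdisj hf.integrableOn, integral_iUnion hm0 hdisj hg.integrableOn]
    exact tsum_congr hP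

lemma stmt4_sup_eq_generateFrom (ms : MeasurableSpace Ω)
    (τ : Ω → ℝ≥0) :
    ms ⊔ MeasurableSpace.comap τ inferInstance =
      MeasurableSpace.generateFrom
        {C | ∃ A B, MeasurableSet[ms] A ∧ MeasurableSet B ∧ C = A ∩ τ ⁻¹' B} := by
  apply le_antisymm
  · refine sup_le ?_ ?_
    · intro A hA
      exact MeasurableSpace.measurableSet_generateFrom
        ⟨A, Set.univ, hA, MeasurableSet.univ, by simp⟩
    · intro E hE
      obtain ⟨B, hB, rfl⟩ := hE
      exact MeasurableSpace.measurableSet_generateFrom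
        ⟨Set.univ, B, MeasurableSet.univ, hB, by simp⟩
  · refine MeasurableSpace.generateFrom_le ?_
    rintro C ⟨A, B, hA, hB, rfl⟩
    exact MeasurableSet.inter ((le_sup_left : ms ≤ _) A hA)
      ((le_sup_right : MeasurableSpace.comap τ inferInstance ≤ _) _ ⟨B, hB, rfl⟩)

end Stmt4Aux

section Stmt4Main

variable {Ω : Type*}

lemma stmt4_main_ennreal {ms mt : MeasurableSpace Ω} {m0 : MeasurableSpace Ω}
    (μ μs : Measure Ω) [IsProbabilityMeasure μ] [IsProbabilityMeasure μs]
    (hsmt : ms ≤ mt) (hmt : mt ≤ m0)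
    (τ : Ω → ℝ≥0) (hτ : Measurable τ)
    (hindep : ProbabilityTheory.Indep (MeasurableSpace.comap τ inferInstance) mt μs)
    (hagreeT : ∀ E, MeasurableSet[mt] E → μs E = μ E) :
    ∀ Y : Ω × ℝ≥0 → ℝ≥0∞, Measurable[mt.prod inferInstance] Y →
    ∃ G : Ω × ℝ≥0 → ℝ≥0∞, Measurable[ms.prod inferInstance] G ∧
      (∀ u A, MeasurableSet[ms] A → ∫⁻ ω in A, G (ω, u) ∂μ = ∫⁻ ω in A, Y (ω, u) ∂μ) ∧
      (∀ A, MeasurableSet[ms] A → ∀ B : Set ℝ≥0, MeasurableSet B →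
        ∫⁻ ω in A ∩ τ ⁻¹' B, G (ω, τ ω) ∂μs
          = ∫⁻ ω in A ∩ τ ⁻¹' B, Y (ω, τ ω) ∂μs) := by
  classical
  have hms : ms ≤ m0 := hsmt.trans hmt
  have hmul := (ProbabilityTheory.Indep_iff _ _ μs).1 hindep
  have hmk_s : ∀ u : ℝ≥0, @Measurable Ω (Ω × ℝ≥0) ms (ms.prod inferInstance)
      (fun ω => (ω, u)) := fun u => Measurable.prod measurable_id measurable_const
  have hmk_t : ∀ u : ℝ≥0, @Measurable Ω (Ω × ℝ≥0) mt (mt.prod inferInstance)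
      (fun ω => (ω, u)) := fun u => Measurable.prod measurable_id measurable_const
  have hT_s : @Measurable Ω (Ω × ℝ≥0) m0 (ms.prod inferInstance) (fun ω => (ω, τ ω)) :=
    Measurable.prod (measurable_id'' hms) hτ
  have hT_t : @Measurable Ω (Ω × ℝ≥0) m0 (mt.prod inferInstance) (fun ω => (ω, τ ω)) :=
    Measurable.prod (measurable_id'' hmt) hτ
  -- Step 1: the claim for indicator sets, phrased with measures.
  have hset : ∀ S : Set (Ω × ℝ≥0), MeasurableSet[mt.prod inferInstance] S →
      ∃ G : Ω × ℝ≥0 → ℝ≥0∞, Measurable[ms.prod inferInstance] G ∧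
        (∀ u A, MeasurableSet[ms] A →
          ∫⁻ ω in A, G (ω, u) ∂μ = μ (A ∩ (fun ω => (ω, u)) ⁻¹' S)) ∧
        (∀ A, MeasurableSet[ms] A → ∀ B : Set ℝ≥0, MeasurableSet B →
          ∫⁻ ω in A ∩ τ ⁻¹' B, G (ω, τ ω) ∂μs
            = μs ((A ∩ τ ⁻¹' B) ∩ (fun ω => (ω, τ ω)) ⁻¹' S)) := by
    intro S hS
    refine @MeasurableSpace.induction_on_inter (Ω × ℝ≥0) (mt.prod inferInstance)
      (fun S _ => ∃ G : Ω × ℝ≥0 → ℝ≥0∞, Measurable[ms.prod inferInstance] G ∧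
        (∀ u A, MeasurableSet[ms] A →
          ∫⁻ ω in A, G (ω, u) ∂μ = μ (A ∩ (fun ω => (ω, u)) ⁻¹' S)) ∧
        (∀ A, MeasurableSet[ms] A → ∀ B : Set ℝ≥0, MeasurableSet B →
          ∫⁻ ω in A ∩ τ ⁻¹' B, G (ω, τ ω) ∂μs
            = μs ((A ∩ τ ⁻¹' B) ∩ (fun ω => (ω, τ ω)) ⁻¹' S))) _
      (@generateFrom_prod Ω ℝ≥0 mt _).symm
      (@isPiSystem_prod Ω ℝ≥0 mt _) ?_ ?_ ?_ ?_ S hS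
    · exact ⟨fun _ => 0, measurable_const, by simp, by simp⟩
    · rintro _ ⟨A₀, hA₀, B₀, hB₀, rfl⟩
      simp only [mem_setOf_eq] at hA₀ hB₀
      have hA₀0 : MeasurableSet A₀ := hmt _ hA₀
      haveI : IsFiniteMeasure ((μ.restrict A₀).trim hms) := isFiniteMeasure_trim hms
      set ρ := (μ.restrict A₀).trim hms with hρ
      set π := μ.trim hms with hπ
      have hac : ρ ≪ π := by
        refine Measure.AbsolutelyContinuous.mk fun E hE h0 => ?_
        rw [hπ, trim_measurableSet_eq hms hE] at h0
        rw [hρ, trim_measurableSet_eq hms hE, Measure.restrict_apply' hA₀0]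
        exact measure_mono_null inter_subset_left h0
      set v : Ω → ℝ≥0∞ := ρ.rnDeriv π with hv
      have hv_meas : Measurable[ms] v := Measure.measurable_rnDeriv ρ π
      have hkey : ∀ A, MeasurableSet[ms] A → ∫⁻ ω in A, v ω ∂μ = μ (A ∩ A₀) := by
        intro A hA
        have h1 : ∫⁻ ω in A, v ω ∂π = ρ A := Measure.setLIntegral_rnDeriv' hac hA
        have h2 : ρ A = μ (A ∩ A₀) := by
          rw [hρ, trim_measurableSet_eq hms hA, Measure.restrict_apply' hA₀0]
        have h3 : ∫⁻ ω in A, v ω ∂μ = ∫⁻ ω in A, v ω ∂π := by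
          rw [hπ, show (μ.trim hms).restrict A = (μ.restrict A).trim hms from
            restrict_trim hms μ hA, lintegral_trim hms hv_meas]
        rw [h3, h1, h2]
      refine ⟨fun p => B₀.indicator (fun _ => (1 : ℝ≥0∞)) p.2 * v p.1, ?_, ?_, ?_⟩
      · exact Measurable.mul
          ((measurable_const.indicator hB₀).comp (@measurable_snd Ω ℝ≥0 ms _))
          (hv_meas.comp (@measurable_fst Ω ℝ≥0 ms _))
      · intro u A hA
        by_cases hu : u ∈ B₀
        · have hsl : (fun ω => (ω, u)) ⁻¹' (A₀ ×ˢ B₀) = A₀ := by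
            ext ω; simp [hu]
          rw [hsl]
          simp only [Set.indicator_of_mem hu, one_mul]
          exact hkey A hA
        · have hsl : (fun ω => (ω, u)) ⁻¹' (A₀ ×ˢ B₀) = ∅ := by
            ext ω; simp [hu]
          rw [hsl]
          simp [Set.indicator_of_notMem hu]
      · intro A hA B hB
        have hCmeas : MeasurableSet (A ∩ τ ⁻¹' B) := (hms _ hA).inter (hτ hB)
        have hre : ∫⁻ ω in A ∩ τ ⁻¹' B,
            B₀.indicator (fun _ => (1 : ℝ≥0∞)) ((fun ω => (ω, τ ω)) ω).2
              * v ((fun ω => (ω, τ ω)) ω).1 ∂μs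
            = ∫⁻ ω, (fun ω => v ω * A.indicator (fun _ => (1 : ℝ≥0∞)) ω) ω
              * (fun ω => (B₀ ∩ B).indicator (fun _ => (1 : ℝ≥0∞)) (τ ω)) ω ∂μs := by
          rw [← lintegral_indicator hCmeas]
          congr 1
          funext ω
          by_cases hA' : ω ∈ A <;> by_cases hB' : τ ω ∈ B <;> by_cases h0' : τ ω ∈ B₀ <;>
            simp [Set.indicator_apply, hA', hB', h0']
        have hprod :=
          ProbabilityTheory.lintegral_mul_eq_lintegral_mul_lintegral_of_independent_measurableSpace
            (Mf := mt) (Mg := MeasurableSpace.comap τ inferInstance) (μ := μs)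
            (f := fun ω => v ω * A.indicator (fun _ => (1 : ℝ≥0∞)) ω)
            (g := fun ω => (B₀ ∩ B).indicator (fun _ => (1 : ℝ≥0∞)) (τ ω))
            hmt (hτ.comap_le) hindep.symm
            ((hv_meas.mono hsmt le_rfl).mul
              (measurable_const.indicator (hsmt _ hA)))
            ((measurable_const.indicator (hB₀.inter hB)).comp
              (Measurable.of_comap_le le_rfl))
        have h1 : ∫⁻ ω, v ω * A.indicator (fun _ => (1 : ℝ≥0∞)) ω ∂μs = μ (A ∩ A₀) := by
          have : (fun ω => v ω * A.indicator (fun _ => (1 : ℝ≥0∞)) ω)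
              = A.indicator v := by
            funext ω; by_cases hA' : ω ∈ A <;> simp [Set.indicator_apply, hA']
          rw [this, lintegral_indicator (hms _ hA),
            ← stmt4_lint_agree hmt hagreeT (hv_meas.mono hsmt le_rfl) (hsmt _ hA)]
          exact hkey A hA
        have h2 : ∫⁻ ω, (B₀ ∩ B).indicator (fun _ => (1 : ℝ≥0∞)) (τ ω) ∂μs
            = μs (τ ⁻¹' (B₀ ∩ B)) := by
          have : (fun ω => (B₀ ∩ B).indicator (fun _ => (1 : ℝ≥0∞)) (τ ω))
              = (τ ⁻¹' (B₀ ∩ B)).indicator (fun _ => (1 : ℝ≥0∞)) := by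
            funext ω; simp only [Set.indicator_apply, Set.mem_preimage]
          rw [this, lintegral_indicator_const (hτ (hB₀.inter hB)), one_mul]
        have hTpre : ((fun ω => (ω, τ ω)) ⁻¹' (A₀ ×ˢ B₀)) = A₀ ∩ τ ⁻¹' B₀ := by
          ext ω; simp
        have hsets : (A ∩ τ ⁻¹' B) ∩ (A₀ ∩ τ ⁻¹' B₀) = τ ⁻¹' (B₀ ∩ B) ∩ (A ∩ A₀) := by
          ext ω; simp only [mem_inter_iff, mem_preimage]; tauto
        rw [hre, hprod, h1, h2, hTpre, hsets, hmul _ _ ⟨B₀ ∩ B, hB₀.inter hB, rfl⟩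
          ((hsmt _ hA).inter hA₀), hagreeT _ ((hsmt _ hA).inter hA₀), mul_comm]
    · rintro S hSm ⟨G, hGm, hGi, hGii⟩
      have hbd : ∀ u : ℝ≥0, ∀ᵐ ω ∂μ, G (ω, u) ≤ 1 := fun u =>
        stmt4_ae_le_one hms (hGm.comp (hmk_s u))
          (fun A hA => by rw [hGi u A hA]; exact measure_mono inter_subset_left)
      refine ⟨fun p => 1 - G p, measurable_const.sub hGm, ?_, ?_⟩
      · intro u A hA
        have hGu_meas : Measurable (fun ω => G (ω, u)) :=
          (hGm.comp (hmk_s u)).mono hms le_rfl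
        have hslm : MeasurableSet ((fun ω => (ω, u)) ⁻¹' S) := hmt _ (hmk_t u hSm)
        have hfin : ∫⁻ ω in A, G (ω, u) ∂μ ≠ ∞ := by
          rw [hGi u A hA]; exact measure_ne_top μ _
        have hstep : ∫⁻ ω in A, (1 - G (ω, u)) ∂μ
            = μ A - μ (A ∩ (fun ω => (ω, u)) ⁻¹' S) := by
          rw [lintegral_sub hGu_meas hfin (ae_restrict_of_ae (hbd u)),
            setLIntegral_one, hGi u A hA]
        rw [hstep]
        have hdiff : A ∩ (fun ω => (ω, u)) ⁻¹' Sᶜ = A \ (A ∩ (fun ω => (ω, u)) ⁻¹' S) := by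
          ext ω; simp only [mem_inter_iff, mem_preimage, mem_compl_iff, mem_diff]; tauto
        rw [hdiff, measure_diff inter_subset_left
          ((hms _ hA).inter hslm).nullMeasurableSet (measure_ne_top μ _)]
      · intro A hA B hB
        set D : Set (Ω × ℝ≥0) := {p | 1 < G p} with hD
        have hDm_s : MeasurableSet[ms.prod inferInstance] D :=
          measurableSet_lt measurable_const hGm
        have hDm_t : MeasurableSet[mt.prod inferInstance] D :=
          stmt4_prod_mono _ hsmt _ hDm_s
        have hslices : ∀ u : ℝ≥0, μs ((fun ω => (ω, u)) ⁻¹' D) = 0 := by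
          intro u
          have h1 : MeasurableSet[ms] ((fun ω => (ω, u)) ⁻¹' D) := hmk_s u hDm_s
          rw [hagreeT _ (hsmt _ h1)]
          have h2 := hbd u
          rw [ae_iff] at h2
          convert h2 using 2
          ext ω; simp [hD, not_le]
        have hDT0 : μs ((fun ω => (ω, τ ω)) ⁻¹' D) = 0 := by
          rw [(stmt4_map_pair hmt μs τ hτ hindep D hDm_t).2]
          simp [hslices]
        have hbd' : ∀ᵐ ω ∂μs, G (ω, τ ω) ≤ 1 := by
          rw [ae_iff]
          convert hDT0 using 2
          ext ω; simp [hD, not_le]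
        have hGT_meas : Measurable (fun ω => G (ω, τ ω)) := hGm.comp hT_s
        have hCmeas : MeasurableSet (A ∩ τ ⁻¹' B) := (hms _ hA).inter (hτ hB)
        have hTSm : MeasurableSet ((fun ω => (ω, τ ω)) ⁻¹' S) := hT_t hSm
        have hfin : ∫⁻ ω in A ∩ τ ⁻¹' B, G (ω, τ ω) ∂μs ≠ ∞ := by
          rw [hGii A hA B hB]; exact measure_ne_top μs _
        have hstep : ∫⁻ ω in A ∩ τ ⁻¹' B, (1 - G (ω, τ ω)) ∂μs
            = μs (A ∩ τ ⁻¹' B) - μs ((A ∩ τ ⁻¹' B) ∩ (fun ω => (ω, τ ω)) ⁻¹' S) := by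
          rw [lintegral_sub hGT_meas hfin (ae_restrict_of_ae hbd'),
            setLIntegral_one, hGii A hA B hB]
        rw [hstep]
        have hdiff : (A ∩ τ ⁻¹' B) ∩ (fun ω => (ω, τ ω)) ⁻¹' Sᶜ
            = (A ∩ τ ⁻¹' B) \ ((A ∩ τ ⁻¹' B) ∩ (fun ω => (ω, τ ω)) ⁻¹' S) := by
          ext ω
          simp only [mem_inter_iff, mem_preimage, mem_compl_iff, mem_diff]; tauto
        rw [hdiff, measure_diff inter_subset_left
          (hCmeas.inter hTSm).nullMeasurableSet (measure_ne_top μs _)]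
    · intro f hdis hfm hP
      choose G hGm hGi hGii using hP
      refine ⟨fun p => ∑' n, G n p, Measurable.ennreal_tsum hGm, ?_, ?_⟩
      · intro u A hA
        rw [lintegral_tsum (f := fun n ω => G n (ω, u)) (fun n =>
          (((hGm n).comp (hmk_s u)).mono hms le_rfl).aemeasurable)]
        have h1 : ∀ n, ∫⁻ ω in A, G n (ω, u) ∂μ = μ (A ∩ (fun ω => (ω, u)) ⁻¹' f n) :=
          fun n => hGi n u A hA
        rw [tsum_congr h1, ← measure_iUnion
          (fun i j hij => ((hdis hij).preimage _).mono inter_subset_right inter_subset_right)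
          (fun n => (hms _ hA).inter (hmt _ (hmk_t u (hfm n))))]
        congr 1
        rw [preimage_iUnion, inter_iUnion]
      · intro A hA B hB
        rw [lintegral_tsum (f := fun n ω => G n (ω, τ ω)) (fun n =>
          ((hGm n).comp hT_s).aemeasurable)]
        have h1 : ∀ n, ∫⁻ ω in A ∩ τ ⁻¹' B, G n (ω, τ ω) ∂μs
            = μs ((A ∩ τ ⁻¹' B) ∩ (fun ω => (ω, τ ω)) ⁻¹' f n) :=
          fun n => hGii n A hA B hB
        rw [tsum_congr h1, ← measure_iUnion
          (fun i j hij => ((hdis hij).preimage _).mono inter_subset_right inter_subset_right)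
          (fun n => ((hms _ hA).inter (hτ hB)).inter (hT_t (hfm n)))]
        congr 1
        rw [preimage_iUnion, inter_iUnion]
  -- Step 2: extend to all nonnegative measurable functions.
  refine stmt4_tsum_induction ?_ ?_
  · intro c S hS
    obtain ⟨G, hGm, hGi, hGii⟩ := hset S hS
    have hslm : ∀ u : ℝ≥0, MeasurableSet ((fun ω => (ω, u)) ⁻¹' S) :=
      fun u => hmt _ (hmk_t u hS)
    refine ⟨fun p => c * G p, hGm.const_mul c, ?_, ?_⟩
    · intro u A hA
      have hind : (fun ω => S.indicator (fun _ => c) (ω, u))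
          = ((fun ω => (ω, u)) ⁻¹' S).indicator (fun _ => c) := by
        funext ω
        simp only [Set.indicator_apply, Set.mem_preimage]
      calc ∫⁻ ω in A, c * G (ω, u) ∂μ
          = c * ∫⁻ ω in A, G (ω, u) ∂μ :=
            lintegral_const_mul c (((hGm.comp (hmk_s u)).mono hms le_rfl))
        _ = c * μ (A ∩ (fun ω => (ω, u)) ⁻¹' S) := by rw [hGi u A hA]
        _ = ∫⁻ ω in A, S.indicator (fun _ => c) (ω, u) ∂μ := by
            rw [hind, lintegral_indicator_const (hslm u),
              Measure.restrict_apply (hslm u), inter_comm]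
    · intro A hA B hB
      have hTSm : MeasurableSet ((fun ω => (ω, τ ω)) ⁻¹' S) := hT_t hS
      have hind : (fun ω => S.indicator (fun _ => c) (ω, τ ω))
          = ((fun ω => (ω, τ ω)) ⁻¹' S).indicator (fun _ => c) := by
        funext ω
        simp only [Set.indicator_apply, Set.mem_preimage]
      calc ∫⁻ ω in A ∩ τ ⁻¹' B, c * G (ω, τ ω) ∂μs
          = c * ∫⁻ ω in A ∩ τ ⁻¹' B, G (ω, τ ω) ∂μs :=
            lintegral_const_mul c (hGm.comp hT_s)
        _ = c * μs ((A ∩ τ ⁻¹' B) ∩ (fun ω => (ω, τ ω)) ⁻¹' S) := by rw [hGii A hA B hB]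
        _ = ∫⁻ ω in A ∩ τ ⁻¹' B, S.indicator (fun _ => c) (ω, τ ω) ∂μs := by
            rw [hind, lintegral_indicator_const hTSm,
              Measure.restrict_apply hTSm, inter_comm]
  · intro f hfm hPf
    choose G hGm hGi hGii using hPf
    refine ⟨fun p => ∑' n, G n p, Measurable.ennreal_tsum hGm, ?_, ?_⟩
    · intro u A hA
      rw [lintegral_tsum (f := fun n ω => G n (ω, u)) (fun n =>
          (((hGm n).comp (hmk_s u)).mono hms le_rfl).aemeasurable),
        lintegral_tsum (f := fun n ω => f n (ω, u)) (fun n =>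
          (((hfm n).comp (hmk_t u)).mono hmt le_rfl).aemeasurable)]
      exact tsum_congr fun n => hGi n u A hA
    · intro A hA B hB
      rw [lintegral_tsum (f := fun n ω => G n (ω, τ ω)) (fun n =>
          ((hGm n).comp hT_s).aemeasurable),
        lintegral_tsum (f := fun n ω => f n (ω, τ ω)) (fun n =>
          ((hfm n).comp hT_t).aemeasurable)]
      exact tsum_congr fun n => hGii n A hA B hB

end Stmt4Main

/-- Under `P*` (τ independent of `F`, `P* = P` on each `F_t` and on `σ(τ)`),
for `s ≤ t` and `y_t(τ)` a `P*`-integrable `G^τ_t`-measurable random variable,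
`E*(y_t(τ) | G^τ_s) = E*(y_t(u)|F_s)|_{u=τ} = E(y_t(u)|F_s)|_{u=τ}` a.s. -/
theorem stmt4 {Ω : Type*} {mΩ : MeasurableSpace Ω} (μ μs : Measure Ω)
    [IsProbabilityMeasure μ] [IsProbabilityMeasure μs]
    (F : Filtration ℝ≥0 mΩ) (τ : Ω → ℝ≥0) (hτ : Measurable τ)
    (hindep : ∀ t, ProbabilityTheory.Indep
      (MeasurableSpace.comap τ inferInstance) (F t) μs)
    (hagreeF : ∀ t, ∀ s : Set Ω, MeasurableSet[F t] s → μs s = μ s)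
    (hagreeτ : ∀ B : Set ℝ≥0, MeasurableSet B → μs (τ ⁻¹' B) = μ (τ ⁻¹' B))
    (𝒢τ : Filtration ℝ≥0 mΩ)
    (h𝒢τ : ∀ r, 𝒢τ r = F r ⊔ MeasurableSpace.comap τ inferInstance)
    (s t : ℝ≥0) (hst : s ≤ t)
    (y : Ω × ℝ≥0 → ℝ) (hy : Measurable[(F t).prod inferInstance] y)
    (hint : Integrable (fun ω => y (ω, τ ω)) μs)
    (hintu : ∀ u, Integrable (fun ω => y (ω, u)) μ) :
    ∃ g : Ω × ℝ≥0 → ℝ, Measurable[(F s).prod inferInstance] g ∧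
      (∀ u, (fun ω => g (ω, u)) =ᵐ[μs] μs[fun ω => y (ω, u) | F s] ∧
            (fun ω => g (ω, u)) =ᵐ[μ] μ[fun ω => y (ω, u) | F s]) ∧
      (μs[fun ω => y (ω, τ ω) | 𝒢τ s]) =ᵐ[μs] fun ω => g (ω, τ ω) := by
  classical
  have hms : F s ≤ mΩ := F.le s
  have hmt : F t ≤ mΩ := F.le t
  have hsmt : F s ≤ F t := F.mono hst
  have hmk_s : ∀ u : ℝ≥0, @Measurable Ω (Ω × ℝ≥0) (F s) ((F s).prod inferInstance)
      (fun ω => (ω, u)) := fun u => Measurable.prod measurable_id measurable_const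
  have hmk_t : ∀ u : ℝ≥0, @Measurable Ω (Ω × ℝ≥0) (F t) ((F t).prod inferInstance)
      (fun ω => (ω, u)) := fun u => Measurable.prod measurable_id measurable_const
  have h1 : F s ≤ 𝒢τ s := by rw [h𝒢τ s]; exact le_sup_left
  have h2 : MeasurableSpace.comap τ inferInstance ≤ 𝒢τ s := by
    rw [h𝒢τ s]; exact le_sup_right
  have hT𝒢 : @Measurable Ω (Ω × ℝ≥0) (𝒢τ s) ((F s).prod inferInstance)
      (fun ω => (ω, τ ω)) := Measurable.prod (measurable_id'' h1) (Measurable.of_comap_le h2)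
  have hTm : @Measurable Ω (Ω × ℝ≥0) mΩ ((F s).prod inferInstance) (fun ω => (ω, τ ω)) :=
    hT𝒢.mono (𝒢τ.le s) le_rfl
  obtain ⟨Gp, hGpm, hGpi, hGpii⟩ := stmt4_main_ennreal μ μs hsmt hmt τ hτ (hindep t)
    (hagreeF t) (fun p => ENNReal.ofReal (y p)) (ENNReal.measurable_ofReal.comp hy)
  obtain ⟨Gm, hGmm, hGmi, hGmii⟩ := stmt4_main_ennreal μ μs hsmt hmt τ hτ (hindep t)
    (hagreeF t) (fun p => ENNReal.ofReal (-y p)) (ENNReal.measurable_ofReal.comp hy.neg)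
  -- slice measurability
  have hy_slice_t : ∀ u : ℝ≥0, Measurable[F t] (fun ω => y (ω, u)) :=
    fun u => hy.comp (hmk_t u)
  have hYp_t : ∀ u : ℝ≥0, Measurable[F t] (fun ω => ENNReal.ofReal (y (ω, u))) :=
    fun u => ENNReal.measurable_ofReal.comp (hy_slice_t u)
  have hYm_t : ∀ u : ℝ≥0, Measurable[F t] (fun ω => ENNReal.ofReal (-y (ω, u))) :=
    fun u => ENNReal.measurable_ofReal.comp (hy_slice_t u).neg
  have hGp_s : ∀ u : ℝ≥0, Measurable[F s] (fun ω => Gp (ω, u)) :=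
    fun u => hGpm.comp (hmk_s u)
  have hGm_s : ∀ u : ℝ≥0, Measurable[F s] (fun ω => Gm (ω, u)) :=
    fun u => hGmm.comp (hmk_s u)
  -- finiteness of the positive/negative lintegrals, per `u`
  have hpfin : ∀ u : ℝ≥0, ∫⁻ ω, ENNReal.ofReal (y (ω, u)) ∂μ ≠ ∞ := by
    intro u
    exact ne_of_lt (lt_of_le_of_lt
      (lintegral_mono fun ω => Real.ofReal_le_enorm _) (hintu u).2)
  have hmfin : ∀ u : ℝ≥0, ∫⁻ ω, ENNReal.ofReal (-y (ω, u)) ∂μ ≠ ∞ := by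
    intro u
    refine ne_of_lt (lt_of_le_of_lt (lintegral_mono fun ω => ?_) (hintu u).2)
    exact le_of_le_of_eq (Real.ofReal_le_enorm _) (by rw [enorm_neg])
  have hGpfin : ∀ u : ℝ≥0, ∫⁻ ω, Gp (ω, u) ∂μ ≠ ∞ := by
    intro u
    have := hGpi u Set.univ MeasurableSet.univ
    simp only [Measure.restrict_univ] at this
    rw [this]; exact hpfin u
  have hGmfin : ∀ u : ℝ≥0, ∫⁻ ω, Gm (ω, u) ∂μ ≠ ∞ := by
    intro u
    have := hGmi u Set.univ MeasurableSet.univ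
    simp only [Measure.restrict_univ] at this
    rw [this]; exact hmfin u
  -- lintegral agreement between μ and μs for F t-measurable functions
  have hagree_lint : ∀ (f : Ω → ℝ≥0∞), Measurable[F t] f → ∀ A, MeasurableSet[F t] A →
      ∫⁻ ω in A, f ω ∂μ = ∫⁻ ω in A, f ω ∂μs :=
    fun f hf A hA => stmt4_lint_agree hmt (hagreeF t) hf hA
  -- μs-versions of the conditional expectation equalities
  have hGpi' : ∀ (u : ℝ≥0) A, MeasurableSet[F s] A →
      ∫⁻ ω in A, Gp (ω, u) ∂μs = ∫⁻ ω in A, ENNReal.ofReal (y (ω, u)) ∂μs := by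
    intro u A hA
    rw [← hagree_lint _ ((hGp_s u).mono hsmt le_rfl) A (hsmt _ hA),
      ← hagree_lint _ (hYp_t u) A (hsmt _ hA)]
    exact hGpi u A hA
  have hGmi' : ∀ (u : ℝ≥0) A, MeasurableSet[F s] A →
      ∫⁻ ω in A, Gm (ω, u) ∂μs = ∫⁻ ω in A, ENNReal.ofReal (-y (ω, u)) ∂μs := by
    intro u A hA
    rw [← hagree_lint _ ((hGm_s u).mono hsmt le_rfl) A (hsmt _ hA),
      ← hagree_lint _ (hYm_t u) A (hsmt _ hA)]
    exact hGmi u A hA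
  have hGpfin' : ∀ u : ℝ≥0, ∫⁻ ω, Gp (ω, u) ∂μs ≠ ∞ := by
    intro u
    have := hagree_lint _ ((hGp_s u).mono hsmt le_rfl) Set.univ MeasurableSet.univ
    simp only [Measure.restrict_univ] at this
    rw [← this]; exact hGpfin u
  have hGmfin' : ∀ u : ℝ≥0, ∫⁻ ω, Gm (ω, u) ∂μs ≠ ∞ := by
    intro u
    have := hagree_lint _ ((hGm_s u).mono hsmt le_rfl) Set.univ MeasurableSet.univ
    simp only [Measure.restrict_univ] at this
    rw [← this]; exact hGmfin u
  -- integrability of `y (·, u)` under μs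
  have hyint_s : ∀ u : ℝ≥0, Integrable (fun ω => y (ω, u)) μs := by
    intro u
    refine ⟨((hy_slice_t u).mono hmt le_rfl).aestronglyMeasurable, ?_⟩
    have h3 : ∫⁻ ω, (‖y (ω, u)‖₊ : ℝ≥0∞) ∂μ = ∫⁻ ω, (‖y (ω, u)‖₊ : ℝ≥0∞) ∂μs := by
      have := hagree_lint _
        (measurable_coe_nnreal_ennreal.comp (measurable_nnnorm.comp (hy_slice_t u)))
        Set.univ MeasurableSet.univ
      simpa only [Measure.restrict_univ, Function.comp_def] using this
    show (∫⁻ ω, (‖y (ω, u)‖₊ : ℝ≥0∞) ∂μs) < ∞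
    rw [← h3]; exact (hintu u).2
  -- per-u measurability of g
  have hgum : ∀ u : ℝ≥0, Measurable[F s]
      (fun ω => (Gp (ω, u)).toReal - (Gm (ω, u)).toReal) :=
    fun u => ((hGp_s u).ennreal_toReal).sub ((hGm_s u).ennreal_toReal)
  -- set-integral identity under μ
  have hIμ : ∀ (u : ℝ≥0) A, MeasurableSet[F s] A →
      ∫ ω in A, ((Gp (ω, u)).toReal - (Gm (ω, u)).toReal) ∂μ = ∫ ω in A, y (ω, u) ∂μ := by
    intro u A hA
    rw [stmt4_integral_toReal_sub (a := fun ω => Gp (ω, u)) (b := fun ω => Gm (ω, u))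
      (((hGp_s u).mono hms le_rfl).aemeasurable)
      (((hGm_s u).mono hms le_rfl).aemeasurable)
      (((setLIntegral_le_lintegral _ _).trans_lt (hGpfin u).lt_top).ne)
      (((setLIntegral_le_lintegral _ _).trans_lt (hGmfin u).lt_top).ne),
      hGpi u A hA, hGmi u A hA]
    exact (integral_eq_lintegral_pos_part_sub_lintegral_neg_part
      ((hintu u).restrict)).symm
  have hIμs : ∀ (u : ℝ≥0) A, MeasurableSet[F s] A →
      ∫ ω in A, ((Gp (ω, u)).toReal - (Gm (ω, u)).toReal) ∂μs = ∫ ω in A, y (ω, u) ∂μs := by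
    intro u A hA
    rw [stmt4_integral_toReal_sub (a := fun ω => Gp (ω, u)) (b := fun ω => Gm (ω, u))
      (((hGp_s u).mono hms le_rfl).aemeasurable)
      (((hGm_s u).mono hms le_rfl).aemeasurable)
      (((setLIntegral_le_lintegral _ _).trans_lt (hGpfin' u).lt_top).ne)
      (((setLIntegral_le_lintegral _ _).trans_lt (hGmfin' u).lt_top).ne),
      hGpi' u A hA, hGmi' u A hA]
    exact (integral_eq_lintegral_pos_part_sub_lintegral_neg_part
      ((hyint_s u).restrict)).symm
  -- conditional expectation equalities per u
  have hcondμ : ∀ u : ℝ≥0, (fun ω => (Gp (ω, u)).toReal - (Gm (ω, u)).toReal)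
      =ᵐ[μ] μ[fun ω => y (ω, u) | F s] := by
    intro u
    refine ae_eq_condExp_of_forall_setIntegral_eq hms (hintu u) ?_
      (fun A hA _ => hIμ u A hA)
      (StronglyMeasurable.aestronglyMeasurable (hgum u).stronglyMeasurable)
    intro A hA _
    exact Integrable.sub
      (integrable_toReal_of_lintegral_ne_top (((hGp_s u).mono hms le_rfl).aemeasurable)
        (((setLIntegral_le_lintegral _ _).trans_lt (hGpfin u).lt_top).ne))
      (integrable_toReal_of_lintegral_ne_top (((hGm_s u).mono hms le_rfl).aemeasurable)
        (((setLIntegral_le_lintegral _ _).trans_lt (hGmfin u).lt_top).ne))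
  have hcondμs : ∀ u : ℝ≥0, (fun ω => (Gp (ω, u)).toReal - (Gm (ω, u)).toReal)
      =ᵐ[μs] μs[fun ω => y (ω, u) | F s] := by
    intro u
    refine ae_eq_condExp_of_forall_setIntegral_eq hms (hyint_s u) ?_
      (fun A hA _ => hIμs u A hA)
      (StronglyMeasurable.aestronglyMeasurable (hgum u).stronglyMeasurable)
    intro A hA _
    exact Integrable.sub
      (integrable_toReal_of_lintegral_ne_top (((hGp_s u).mono hms le_rfl).aemeasurable)
        (((setLIntegral_le_lintegral _ _).trans_lt (hGpfin' u).lt_top).ne))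
      (integrable_toReal_of_lintegral_ne_top (((hGm_s u).mono hms le_rfl).aemeasurable)
        (((setLIntegral_le_lintegral _ _).trans_lt (hGmfin' u).lt_top).ne))
  -- finiteness for the composed functions
  have hGpTfin : ∫⁻ ω, Gp (ω, τ ω) ∂μs ≠ ∞ := by
    have h3 := hGpii Set.univ MeasurableSet.univ Set.univ MeasurableSet.univ
    simp only [Set.preimage_univ, Set.univ_inter, Set.inter_univ,
      Measure.restrict_univ] at h3
    rw [h3]
    exact ne_of_lt (lt_of_le_of_lt
      (lintegral_mono fun ω => Real.ofReal_le_enorm _) hint.2)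
  have hGmTfin : ∫⁻ ω, Gm (ω, τ ω) ∂μs ≠ ∞ := by
    have h3 := hGmii Set.univ MeasurableSet.univ Set.univ MeasurableSet.univ
    simp only [Set.preimage_univ, Set.univ_inter, Set.inter_univ,
      Measure.restrict_univ] at h3
    rw [h3]
    refine ne_of_lt (lt_of_le_of_lt (lintegral_mono fun ω => ?_) hint.2)
    exact le_of_le_of_eq (Real.ofReal_le_enorm _) (by rw [enorm_neg])
  have hgT_int : Integrable (fun ω => (Gp (ω, τ ω)).toReal - (Gm (ω, τ ω)).toReal) μs :=
    Integrable.sub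
      (integrable_toReal_of_lintegral_ne_top ((hGpm.comp hTm).aemeasurable) hGpTfin)
      (integrable_toReal_of_lintegral_ne_top ((hGmm.comp hTm).aemeasurable) hGmTfin)
  -- the π-system generating 𝒢τ s
  set p : Set (Set Ω) :=
    {C | ∃ A B, MeasurableSet[F s] A ∧ MeasurableSet B ∧ C = A ∩ τ ⁻¹' B} with hp
  have hgen : 𝒢τ s = MeasurableSpace.generateFrom p := by
    rw [h𝒢τ s]; exact stmt4_sup_eq_generateFrom _ τ
  have hpi : IsPiSystem p := by
    rintro C1 ⟨A1, B1, hA1, hB1, rfl⟩ C2 ⟨A2, B2, hA2, hB2, rfl⟩ _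
    refine ⟨A1 ∩ A2, B1 ∩ B2, hA1.inter hA2, hB1.inter hB2, ?_⟩
    ext ω; simp only [Set.mem_inter_iff, Set.mem_preimage]; tauto
  have huniv : Set.univ ∈ p :=
    ⟨Set.univ, Set.univ, MeasurableSet.univ, MeasurableSet.univ, by simp⟩
  -- set-integral identity on the π-system
  have hπint : ∀ C ∈ p, ∫ ω in C, ((Gp (ω, τ ω)).toReal - (Gm (ω, τ ω)).toReal) ∂μs
      = ∫ ω in C, y (ω, τ ω) ∂μs := by
    rintro _ ⟨A, B, hA, hB, rfl⟩
    rw [stmt4_integral_toReal_sub (a := fun ω => Gp (ω, τ ω)) (b := fun ω => Gm (ω, τ ω))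
      ((hGpm.comp hTm).aemeasurable)
      ((hGmm.comp hTm).aemeasurable)
      (((setLIntegral_le_lintegral _ _).trans_lt hGpTfin.lt_top).ne)
      (((setLIntegral_le_lintegral _ _).trans_lt hGmTfin.lt_top).ne),
      hGpii A hA B hB, hGmii A hA B hB]
    exact (integral_eq_lintegral_pos_part_sub_lintegral_neg_part (hint.restrict)).symm
  have hall := stmt4_setIntegral_ext (𝒢τ.le s) hgen hpi huniv hgT_int hint hπint
  refine ⟨fun pq => (Gp pq).toReal - (Gm pq).toReal,
    (Measurable.ennreal_toReal hGpm).sub (Measurable.ennreal_toReal hGmm),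
    fun u => ⟨hcondμs u, hcondμ u⟩, ?_⟩
  refine (ae_eq_condExp_of_forall_setIntegral_eq (𝒢τ.le s) hint
    (fun C _ _ => hgT_int.integrableOn) (fun C hC _ => hall C hC) ?_).symm
  exact StronglyMeasurable.aestronglyMeasurable
    (((hGpm.comp hT𝒢).ennreal_toReal).sub ((hGmm.comp hT𝒢).ennreal_toReal)).stronglyMeasurable
end

section
/- Projecting the martingale L_t = 1/p_t(τ) onto the progressively enlarged filtration G gives the Radon–Nikodým density of P* with respect to P on G_t: ℓ_t := E(L_t | G_t) = 1_{t < τ} G*(t)/G_t + 1_{τ ≤ t} / p_t(τ), where G*(t) = P(τ > t). -/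
open MeasureTheory Filter Set
open scoped NNReal ENNReal

lemma aux_pi : IsPiSystem ({(Set.univ : Set ℝ≥0)} ∪ Set.range Set.Ioi) := by
  rintro s (rfl | ⟨a, rfl⟩) u (rfl | ⟨b, rfl⟩) _
  · simp
  · simp
  · simp only [Set.inter_univ]; exact Or.inr ⟨a, rfl⟩
  · rw [Set.Ioi_inter_Ioi]; exact Or.inr ⟨a ⊔ b, rfl⟩

lemma aux_gen : MeasurableSpace.generateFrom ({(Set.univ : Set ℝ≥0)} ∪ Set.range Set.Ioi)
    = (inferInstance : MeasurableSpace ℝ≥0) := by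
  apply le_antisymm
  · exact MeasurableSpace.generateFrom_le (by rintro s (rfl | ⟨a, rfl⟩) <;> measurability)
  · conv_lhs => rw [BorelSpace.measurable_eq (α := ℝ≥0), borel_eq_generateFrom_Ioi]
    exact MeasurableSpace.generateFrom_le fun s hs =>
      MeasurableSpace.measurableSet_generateFrom (Or.inr hs)

lemma aux_span : IsCountablySpanning ({(Set.univ : Set ℝ≥0)} ∪ Set.range Set.Ioi) :=
  ⟨fun _ => Set.univ, fun _ => Or.inl rfl, Set.iUnion_const _⟩

lemma aux_ext {Ω : Type*} {m : MeasurableSpace Ω}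
    (κ₁ κ₂ : @Measure (Ω × ℝ≥0) (m.prod inferInstance))
    (h1 : IsFiniteMeasure κ₁)
    (h : ∀ B : Set Ω, MeasurableSet[m] B → ∀ θ : ℝ≥0,
      κ₁ (B ×ˢ Set.Ioi θ) = κ₂ (B ×ˢ Set.Ioi θ))
    (h' : ∀ B : Set Ω, MeasurableSet[m] B →
      κ₁ (B ×ˢ (Set.univ : Set ℝ≥0)) = κ₂ (B ×ˢ (Set.univ : Set ℝ≥0))) :
    κ₁ = κ₂ := by
  letI : MeasurableSpace Ω := m
  have hgen : (m.prod inferInstance : MeasurableSpace (Ω × ℝ≥0)) =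
      MeasurableSpace.generateFrom
        (Set.image2 (· ×ˢ ·) {B : Set Ω | MeasurableSet B}
          ({(Set.univ : Set ℝ≥0)} ∪ Set.range Set.Ioi)) := by
    refine (generateFrom_eq_prod MeasurableSpace.generateFrom_measurableSet
      aux_gen isCountablySpanning_measurableSet aux_span).symm
  refine @ext_of_generate_finite (Ω × ℝ≥0) (m.prod inferInstance) κ₁ κ₂ _ hgen
    (MeasurableSpace.isPiSystem_measurableSet.prod aux_pi) h1 ?_ ?_
  · rintro _ ⟨B, hB, S, (rfl | ⟨θ, rfl⟩), rfl⟩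
    · exact h' B hB
    · exact h B hB θ
  · rw [← Set.univ_prod_univ]
    exact h' Set.univ MeasurableSet.univ

lemma aux_kernel {Ω : Type*} {m m0 : MeasurableSpace Ω} (hm : m ≤ m0)
    (μ : @Measure Ω m0) (hfin : IsFiniteMeasure μ)
    (ν : Measure ℝ≥0) (hνfin : IsFiniteMeasure ν)
    (τ : Ω → ℝ≥0) (hτ : @Measurable Ω ℝ≥0 m0 _ τ)
    (ρ : Ω × ℝ≥0 → ℝ≥0∞) (hρ : Measurable[m.prod inferInstance] ρ)
    (t : ℝ≥0) (D : Set Ω) (hD : MeasurableSet[m] D)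
    (hcond : ∀ B : Set Ω, MeasurableSet[m] B → ∀ θ : ℝ≥0, t ≤ θ →
      μ ((B ∩ D) ∩ {ω | θ < τ ω}) = ∫⁻ ω in B ∩ D, ∫⁻ u in Set.Ioi θ, ρ (ω, u) ∂ν ∂μ)
    (f : Ω × ℝ≥0 → ℝ≥0∞) (hf : Measurable[m.prod inferInstance] f) :
    ∫⁻ ω in D ∩ {ω | t < τ ω}, f (ω, τ ω) ∂μ
      = ∫⁻ ω in D, ∫⁻ u in Set.Ioi t, f (ω, u) * ρ (ω, u) ∂ν ∂μ := by
  letI : MeasurableSpace Ω := m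
  haveI := hfin; haveI := hνfin
  haveI : IsFiniteMeasure (μ.trim hm) := isFiniteMeasure_trim hm
  have hpair : @Measurable Ω (Ω × ℝ≥0) m0 _ (fun ω => (ω, τ ω)) :=
    Measurable.prodMk (measurable_id'' hm) hτ
  haveI hmapfin : IsFiniteMeasure (@Measure.map Ω (Ω × ℝ≥0) m0 _ (fun ω => (ω, τ ω)) μ) := by
    constructor
    rw [Measure.map_apply hpair MeasurableSet.univ]
    exact measure_lt_top μ _
  -- the two measures
  set κ₁ : Measure (Ω × ℝ≥0) := (@Measure.map Ω (Ω × ℝ≥0) m0 _ (fun ω => (ω, τ ω)) μ).restrict (D ×ˢ Set.Ioi t) with hκ₁def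
  set κ₂ : Measure (Ω × ℝ≥0) :=
    (((μ.trim hm).prod ν).withDensity ρ).restrict (D ×ˢ Set.Ioi t) with hκ₂def
  -- computations of values
  have hK1 : ∀ B : Set Ω, MeasurableSet B → ∀ θ : ℝ≥0,
      (@Measure.map Ω (Ω × ℝ≥0) m0 _ (fun ω => (ω, τ ω)) μ) (B ×ˢ Set.Ioi θ) = μ (B ∩ {ω | θ < τ ω}) := by
    intro B hB θ
    rw [Measure.map_apply hpair (hB.prod measurableSet_Ioi), Set.mk_preimage_prod]
    rfl
  have hK2 : ∀ B : Set Ω, MeasurableSet B → ∀ θ : ℝ≥0,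
      (((μ.trim hm).prod ν).withDensity ρ) (B ×ˢ Set.Ioi θ)
        = ∫⁻ ω in B, ∫⁻ u in Set.Ioi θ, ρ (ω, u) ∂ν ∂μ := by
    intro B hB θ
    rw [withDensity_apply _ (hB.prod measurableSet_Ioi), ← Measure.prod_restrict,
      lintegral_prod _ hρ.aemeasurable, restrict_trim hm μ hB,
      lintegral_trim hm]
    exact hρ.lintegral_prod_right'
  have hκeq : κ₁ = κ₂ := by
    refine aux_ext κ₁ κ₂ inferInstance ?_ ?_
    · intro B hB θ
      rw [hκ₁def, hκ₂def, Measure.restrict_apply (hB.prod measurableSet_Ioi),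
        Measure.restrict_apply (hB.prod measurableSet_Ioi),
        Set.prod_inter_prod, Set.Ioi_inter_Ioi, hK1 _ (hB.inter hD),
        hK2 _ (hB.inter hD)]
      exact hcond B hB (θ ⊔ t) le_sup_right
    · intro B hB
      rw [hκ₁def, hκ₂def, Measure.restrict_apply (hB.prod MeasurableSet.univ),
        Measure.restrict_apply (hB.prod MeasurableSet.univ),
        Set.prod_inter_prod, Set.univ_inter, hK1 _ (hB.inter hD), hK2 _ (hB.inter hD)]
      exact hcond B hB t le_rfl
  have hlhs : ∫⁻ q, f q ∂κ₁ = ∫⁻ ω in D ∩ {ω | t < τ ω}, f (ω, τ ω) ∂μ := by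
    rw [hκ₁def, @setLIntegral_map Ω (Ω × ℝ≥0) m0 _ μ _ _ _ (hD.prod measurableSet_Ioi) hf hpair,
      Set.mk_preimage_prod]
    rfl
  have hrhs : ∫⁻ q, f q ∂κ₂ = ∫⁻ ω in D, ∫⁻ u in Set.Ioi t, ρ (ω, u) * f (ω, u) ∂ν ∂μ := by
    rw [hκ₂def, restrict_withDensity (hD.prod measurableSet_Ioi),
      lintegral_withDensity_eq_lintegral_mul _ hρ hf]
    simp_rw [Pi.mul_apply]
    rw [← Measure.prod_restrict,
      lintegral_prod (fun z => ρ z * f z) ((hρ.mul hf).aemeasurable), restrict_trim hm μ hD,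
      lintegral_trim hm (show Measurable[m] (fun x => ∫⁻ y in Set.Ioi t, ρ (x, y) * f (x, y) ∂ν) from (hρ.mul hf).lintegral_prod_right')]
  rw [← hlhs, hκeq, hrhs]
  exact lintegral_congr fun ω => lintegral_congr fun u => mul_comm _ _

open MeasureTheory Filter Set
open scoped NNReal ENNReal

section helpers
variable {Ω : Type*}

lemma aux_G_meas {m : MeasurableSpace Ω} (ν' : Measure ℝ≥0) [SFinite ν']
    (q : Ω × ℝ≥0 → ℝ) (hq : Measurable[m.prod inferInstance] q) :
    StronglyMeasurable[m] (fun ω => ∫ u, q (ω, u) ∂ν') := by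
  letI := m
  exact hq.stronglyMeasurable.integral_prod_right'

lemma aux_D_meas {m : MeasurableSpace Ω} (ν' : Measure ℝ≥0) [SFinite ν']
    (q : Ω × ℝ≥0 → ℝ) (hq : Measurable[m.prod inferInstance] q) :
    MeasurableSet[m] {ω | Integrable (fun u => q (ω, u)) ν'} := by
  letI := m
  exact measurableSet_integrable (f := fun ω u => q (ω, u)) hq.stronglyMeasurable

lemma aux_min_meas {m : MeasurableSpace Ω} (τ : Ω → ℝ≥0) (t : ℝ≥0)
    (h : ∀ v, v ≤ t → MeasurableSet[m] {ω | τ ω ≤ v}) :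
    Measurable[m] fun ω => min (τ ω) t := by
  letI := m
  apply measurable_of_Iic
  intro v
  by_cases hv : t ≤ v
  · have : (fun ω => min (τ ω) t) ⁻¹' Set.Iic v = Set.univ := by
      ext ω; simp [min_le_iff, Or.inr hv]
    rw [this]; exact MeasurableSet.univ
  · have : (fun ω => min (τ ω) t) ⁻¹' Set.Iic v = {ω | τ ω ≤ v} := by
      ext ω; simp [min_le_iff, hv]
    rw [this]; exact h v (not_le.mp hv).le

end helpers

open MeasureTheory Filter Set
open scoped NNReal ENNReal


set_option maxHeartbeats 2000000 in
/-- Projecting `L_t = 1/p_t(τ)` on the progressively enlarged filtration `G`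
gives `ℓ_t = E(L_t | G_t) = 1_{t<τ} G*(t)/G_t + 1_{τ≤t}/p_t(τ)`, where `G*(t) = P(τ > t)`
and `G_t = ∫_t^∞ p_t(u) ν(du)`. -/
theorem stmt7 {Ω : Type*} {mΩ : MeasurableSpace Ω} (μ : Measure Ω) [IsProbabilityMeasure μ]
    (F : Filtration ℝ≥0 mΩ) (τ : Ω → ℝ≥0) (hτ : Measurable τ)
    (ν : Measure ℝ≥0) (hν : ν = μ.map τ)
    (p : ℝ≥0 → ℝ≥0 → Ω → ℝ)
    (hpmeas : ∀ t, Measurable[(F t).prod inferInstance] fun q : Ω × ℝ≥0 => p t q.2 q.1)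
    (hppos : ∀ t u ω, 0 < p t u ω)
    (hpmart : ∀ᵐ u ∂ν, Martingale (fun t ω => p t u ω) F μ)
    (hdens : ∀ t θ : ℝ≥0,
      (μ[fun ω => if θ < τ ω then (1 : ℝ) else 0 | F t]) =ᵐ[μ]
        fun ω => ∫ u in Set.Ioi θ, p t u ω ∂ν)
    (𝒢 : Filtration ℝ≥0 mΩ)
    (h𝒢 : ∀ r, 𝒢 r = F r ⊔ ⨆ v ∈ Set.Iic r,
      MeasurableSpace.comap (fun ω => if τ ω ≤ v then (1 : ℝ) else 0) inferInstance)
    (t : ℝ≥0)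
    (hLint : Integrable (fun ω => (p t (τ ω) ω)⁻¹) μ) :
    (μ[fun ω => (p t (τ ω) ω)⁻¹ | 𝒢 t]) =ᵐ[μ]
      fun ω => if t < τ ω then (ν (Set.Ioi t)).toReal / (∫ u in Set.Ioi t, p t u ω ∂ν)
               else (p t (τ ω) ω)⁻¹ := by
  classical
  have hFle : F t ≤ mΩ := F.le t
  have h𝒢le : 𝒢 t ≤ mΩ := 𝒢.le t
  have hF𝒢 : F t ≤ 𝒢 t := by rw [h𝒢 t]; exact le_sup_left
  haveI : IsProbabilityMeasure ν := by
    rw [hν]; exact Measure.isProbabilityMeasure_map hτ.aemeasurable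
  haveI : IsFiniteMeasure ν := inferInstance
  haveI : IsFiniteMeasure (μ.trim h𝒢le) := isFiniteMeasure_trim h𝒢le
  haveI : IsFiniteMeasure (μ.trim hFle) := isFiniteMeasure_trim hFle
  -- notation
  set L : Ω → ℝ := fun ω => (p t (τ ω) ω)⁻¹ with hLdef
  set c : ℝ := (ν (Set.Ioi t)).toReal with hcdef
  set g : Ω → ℝ := fun ω => if t < τ ω then c / (∫ u in Set.Ioi t, p t u ω ∂ν) else L ω
    with hgdef
  set G : Ω → ℝ := fun ω => ∫ u in Set.Ioi t, p t u ω ∂ν with hGdef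
  set D : Set Ω := {ω | IntegrableOn (fun u => p t u ω) (Set.Ioi t) ν} with hDdef
  -- measurability
  have hGsm : StronglyMeasurable[F t] G :=
    aux_G_meas (ν.restrict (Set.Ioi t)) _ (hpmeas t)
  have hGm : Measurable[F t] G := hGsm.measurable
  have hD : MeasurableSet[F t] D :=
    aux_D_meas (ν.restrict (Set.Ioi t)) _ (hpmeas t)
  have hτIoi : ∀ θ : ℝ≥0, MeasurableSet[mΩ] {ω | θ < τ ω} := fun θ =>
    hτ measurableSet_Ioi
  have hGnn : ∀ ω, 0 ≤ G ω := by
    intro ω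
    exact integral_nonneg fun u => (hppos t u ω).le
  have hcnn : 0 ≤ c := ENNReal.toReal_nonneg
  -- key conditional-expectation identity
  have key1 : ∀ B : Set Ω, MeasurableSet[F t] B → ∀ θ : ℝ≥0,
      (μ (B ∩ {ω | θ < τ ω})).toReal = ∫ ω in B, (∫ u in Set.Ioi θ, p t u ω ∂ν) ∂μ := by
    intro B hB θ
    have hset : MeasurableSet {ω | θ < τ ω} := hτIoi θ
    have hφint : Integrable (fun ω => if θ < τ ω then (1 : ℝ) else 0) μ := by
      have : (fun ω => if θ < τ ω then (1 : ℝ) else 0)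
          = Set.indicator {ω | θ < τ ω} (fun _ => (1 : ℝ)) := by
        funext ω; by_cases h : θ < τ ω <;> simp [Set.indicator_apply, h]
      rw [this]; exact (integrable_const 1).indicator hset
    calc (μ (B ∩ {ω | θ < τ ω})).toReal
        = ∫ ω in B, Set.indicator {ω | θ < τ ω} (fun _ => (1 : ℝ)) ω ∂μ := by
          rw [setIntegral_indicator hset, setIntegral_const, smul_eq_mul, mul_one]; rfl
      _ = ∫ ω in B, (if θ < τ ω then (1 : ℝ) else 0) ∂μ := by
          refine setIntegral_congr_fun (hFle B hB) fun ω _ => ?_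
          by_cases h : θ < τ ω <;> simp [Set.indicator_apply, h]
      _ = ∫ ω in B, (μ[fun ω => if θ < τ ω then (1 : ℝ) else 0 | F t]) ω ∂μ :=
          (setIntegral_condExp hFle hφint hB).symm
      _ = ∫ ω in B, (∫ u in Set.Ioi θ, p t u ω ∂ν) ∂μ :=
          setIntegral_congr_ae (hFle B hB) ((hdens t θ).mono fun ω h _ => h)
  -- the disintegration hypothesis for aux_kernel
  have key2 : ∀ B : Set Ω, MeasurableSet[F t] B → ∀ θ : ℝ≥0, t ≤ θ →
      μ ((B ∩ D) ∩ {ω | θ < τ ω})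
        = ∫⁻ ω in B ∩ D, ∫⁻ u in Set.Ioi θ, ENNReal.ofReal (p t u ω) ∂ν ∂μ := by
    intro B hB θ hθ
    have hBD : MeasurableSet[F t] (B ∩ D) := hB.inter hD
    have hGθint : Integrable (fun ω => ∫ u in Set.Ioi θ, p t u ω ∂ν) μ :=
      integrable_condExp.congr (hdens t θ)
    rw [(ENNReal.ofReal_toReal (measure_ne_top μ _)).symm, key1 _ hBD θ,
      ofReal_integral_eq_lintegral_ofReal hGθint.integrableOn
        (Filter.Eventually.of_forall fun ω => integral_nonneg fun u => (hppos t u ω).le)]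
    refine setLIntegral_congr_fun (hFle _ hBD)
      (fun ω hω => ?_)
    have hωD : IntegrableOn (fun u => p t u ω) (Set.Ioi t) ν := hω.2
    exact ofReal_integral_eq_lintegral_ofReal (hωD.mono_set (Set.Ioi_subset_Ioi hθ))
      (Filter.Eventually.of_forall fun u => (hppos t u ω).le)
  -- the bad set is null
  have hnullD : μ (Dᶜ ∩ {ω | t < τ ω}) = 0 := by
    have hDc : MeasurableSet[F t] Dᶜ := hD.compl
    have h0 : ∫ ω in Dᶜ, (∫ u in Set.Ioi t, p t u ω ∂ν) ∂μ = ∫ ω in Dᶜ, (0 : ℝ) ∂μ :=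
      setIntegral_congr_fun (hFle _ hDc) fun ω hω => integral_undef hω
    have h2 : (μ (Dᶜ ∩ {ω | t < τ ω})).toReal = 0 := by
      rw [key1 _ hDc t, h0, integral_zero]
    exact ((ENNReal.toReal_eq_zero_iff _).mp h2).resolve_right (measure_ne_top μ _)
  have haeq : ∀ B : Set Ω, ((B ∩ D) ∩ {ω | t < τ ω} : Set Ω) =ᵐ[μ] ((B ∩ {ω | t < τ ω} : Set Ω)) := by
    intro B
    refine (MeasureTheory.ae_eq_set.2 ⟨?_, ?_⟩)
    · have : ((B ∩ D) ∩ {ω | t < τ ω}) \ (B ∩ {ω | t < τ ω}) = ∅ := by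
        ext ω; simp only [Set.mem_diff, Set.mem_inter_iff, Set.mem_empty_iff_false]; tauto
      rw [this]; exact measure_empty
    · refine measure_mono_null ?_ hnullD
      rintro ω ⟨⟨hB, ht'⟩, hn⟩
      exact ⟨fun hDω => hn ⟨⟨hB, hDω⟩, ht'⟩, ht'⟩
  -- c = 0 when G vanishes on D
  have hGzero : ∀ ω ∈ D, G ω = 0 → c = 0 := by
    intro ω hωD hG0
    have hωD' : IntegrableOn (fun u => p t u ω) (Set.Ioi t) ν := hωD
    have h0 : (fun u => p t u ω) =ᵐ[ν.restrict (Set.Ioi t)] 0 :=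
      (integral_eq_zero_iff_of_nonneg_ae
        (Filter.Eventually.of_forall fun u => (hppos t u ω).le) hωD').mp hG0
    rw [Filter.EventuallyEq, ae_iff] at h0
    have huniv : {u | ¬ (fun u => p t u ω) u = (0 : ℝ≥0 → ℝ) u} = Set.univ := by
      ext u; simp [(hppos t u ω).ne']
    rw [huniv, Measure.restrict_apply_univ] at h0
    rw [hcdef, h0, ENNReal.toReal_zero]
  -- main lintegral identities
  have E1 : ∀ B : Set Ω, MeasurableSet[F t] B →
      ∫⁻ ω in B ∩ {ω | t < τ ω}, ENNReal.ofReal (L ω) ∂μ = ν (Set.Ioi t) * μ (B ∩ D) := by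
    intro B hB
    have hBD : MeasurableSet[F t] (B ∩ D) := hB.inter hD
    have hcondBD : ∀ B' : Set Ω, MeasurableSet[F t] B' → ∀ θ : ℝ≥0, t ≤ θ →
        μ ((B' ∩ (B ∩ D)) ∩ {ω | θ < τ ω})
          = ∫⁻ ω in B' ∩ (B ∩ D), ∫⁻ u in Set.Ioi θ, ENNReal.ofReal (p t u ω) ∂ν ∂μ := by
      intro B' hB' θ hθ
      rw [← Set.inter_assoc]
      exact key2 (B' ∩ B) (hB'.inter hB) θ hθ
    have hker := aux_kernel hFle μ inferInstance ν inferInstance τ hτ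
      (fun q => ENNReal.ofReal (p t q.2 q.1))
      (ENNReal.measurable_ofReal.comp (hpmeas t)) t (B ∩ D) hBD hcondBD
      (fun q => ENNReal.ofReal ((p t q.2 q.1)⁻¹))
      (ENNReal.measurable_ofReal.comp (hpmeas t).inv)
    calc ∫⁻ ω in B ∩ {ω | t < τ ω}, ENNReal.ofReal (L ω) ∂μ
        = ∫⁻ ω in (B ∩ D) ∩ {ω | t < τ ω}, ENNReal.ofReal (L ω) ∂μ := by
          rw [Measure.restrict_congr_set (haeq B)]
      _ = ∫⁻ ω in B ∩ D, ∫⁻ u in Set.Ioi t,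
            ENNReal.ofReal ((p t u ω)⁻¹) * ENNReal.ofReal (p t u ω) ∂ν ∂μ := hker
      _ = ∫⁻ ω in B ∩ D, (ν (Set.Ioi t) : ℝ≥0∞) ∂μ := by
          refine lintegral_congr fun ω => ?_
          have h1 : ∀ u, ENNReal.ofReal ((p t u ω)⁻¹) * ENNReal.ofReal (p t u ω) = 1 :=
            fun u => by
              rw [← ENNReal.ofReal_mul (inv_nonneg.2 (hppos t u ω).le),
                inv_mul_cancel₀ (hppos t u ω).ne', ENNReal.ofReal_one]
          simp_rw [h1]
          exact setLIntegral_one _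
      _ = ν (Set.Ioi t) * μ (B ∩ D) := by
          rw [setLIntegral_const]
  have E2 : ∀ B : Set Ω, MeasurableSet[F t] B →
      ∫⁻ ω in B ∩ {ω | t < τ ω}, ENNReal.ofReal (c / G ω) ∂μ = ν (Set.Ioi t) * μ (B ∩ D) := by
    intro B hB
    have hBD : MeasurableSet[F t] (B ∩ D) := hB.inter hD
    have hcondBD : ∀ B' : Set Ω, MeasurableSet[F t] B' → ∀ θ : ℝ≥0, t ≤ θ →
        μ ((B' ∩ (B ∩ D)) ∩ {ω | θ < τ ω})
          = ∫⁻ ω in B' ∩ (B ∩ D), ∫⁻ u in Set.Ioi θ, ENNReal.ofReal (p t u ω) ∂ν ∂μ := by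
      intro B' hB' θ hθ
      rw [← Set.inter_assoc]
      exact key2 (B' ∩ B) (hB'.inter hB) θ hθ
    have hfst : @Measurable (Ω × ℝ≥0) Ω ((F t).prod inferInstance) (F t) Prod.fst :=
      measurable_fst
    have hf2 : Measurable[(F t).prod inferInstance]
        (fun q : Ω × ℝ≥0 => ENNReal.ofReal (c / G q.1)) :=
      ENNReal.measurable_ofReal.comp ((measurable_const.div hGm).comp hfst)
    have hker := aux_kernel hFle μ inferInstance ν inferInstance τ hτ
      (fun q => ENNReal.ofReal (p t q.2 q.1))
      (ENNReal.measurable_ofReal.comp (hpmeas t)) t (B ∩ D) hBD hcondBD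
      (fun q : Ω × ℝ≥0 => ENNReal.ofReal (c / G q.1)) hf2
    calc ∫⁻ ω in B ∩ {ω | t < τ ω}, ENNReal.ofReal (c / G ω) ∂μ
        = ∫⁻ ω in (B ∩ D) ∩ {ω | t < τ ω}, ENNReal.ofReal (c / G ω) ∂μ := by
          rw [Measure.restrict_congr_set (haeq B)]
      _ = ∫⁻ ω in B ∩ D, ∫⁻ u in Set.Ioi t,
            ENNReal.ofReal (c / G ω) * ENNReal.ofReal (p t u ω) ∂ν ∂μ := hker
      _ = ∫⁻ ω in B ∩ D, ENNReal.ofReal c ∂μ := by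
          refine setLIntegral_congr_fun (hFle _ hBD)
            (fun ω hω => ?_)
          have hωD : IntegrableOn (fun u => p t u ω) (Set.Ioi t) ν := hω.2
          have hmk : @Measurable ℝ≥0 (Ω × ℝ≥0) _ ((F t).prod inferInstance)
              (fun u => (ω, u)) := Measurable.prodMk measurable_const measurable_id
          have hmeasu : Measurable fun u => ENNReal.ofReal (p t u ω) :=
            ENNReal.measurable_ofReal.comp ((hpmeas t).comp hmk)
          rw [lintegral_const_mul _ hmeasu,
            ← ofReal_integral_eq_lintegral_ofReal hωD
              (Filter.Eventually.of_forall fun u => (hppos t u ω).le)]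
          by_cases hG0 : G ω = 0
          · rw [hGzero ω hω.2 hG0]
            simp [hGdef ▸ hG0]
          · rw [← ENNReal.ofReal_mul (div_nonneg hcnn (hGnn ω))]
            congr 1
            exact div_mul_cancel₀ _ hG0
      _ = ν (Set.Ioi t) * μ (B ∩ D) := by
          rw [setLIntegral_const, hcdef, ENNReal.ofReal_toReal (measure_ne_top ν _)]
  -- integrability of the indicator part
  have hInd1 : Integrable (Set.indicator {ω | t < τ ω} (fun ω => c / G ω)) μ := by
    have hset : MeasurableSet {ω | t < τ ω} := hτIoi t
    have hGmΩ : Measurable G := hGm.mono hFle le_rfl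
    refine ⟨((measurable_const.div hGmΩ).indicator hset).aestronglyMeasurable, ?_⟩
    rw [hasFiniteIntegral_iff_ofReal (Filter.Eventually.of_forall
      (Set.indicator_nonneg fun ω _ => div_nonneg hcnn (hGnn ω)))]
    have hrw : ∀ ω, ENNReal.ofReal (Set.indicator {ω | t < τ ω} (fun ω => c / G ω) ω)
        = Set.indicator {ω | t < τ ω} (fun ω => ENNReal.ofReal (c / G ω)) ω := by
      intro ω; by_cases h : ω ∈ {ω | t < τ ω} <;>
        simp [Set.indicator_apply, h]
    simp_rw [hrw]
    rw [lintegral_indicator hset]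
    have := E2 Set.univ MeasurableSet.univ
    rw [Set.univ_inter] at this
    rw [this]
    exact ENNReal.mul_lt_top (measure_lt_top ν _) (measure_lt_top μ _)
  have hset1 : MeasurableSet {ω | t < τ ω} := hτIoi t
  have hgsplit : g = fun ω => Set.indicator {ω | t < τ ω} (fun ω => c / G ω) ω
      + Set.indicator {ω | t < τ ω}ᶜ L ω := by
    funext ω
    by_cases h : t < τ ω <;>
      simp [hgdef, hGdef, Set.indicator_apply, h]
  have hIndg : Integrable g μ := by
    rw [hgsplit]
    exact hInd1.add (hLint.indicator hset1.compl)
  -- set integral equality on a π-system generating 𝒢 t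
  -- measurability of {τ ≤ v} in 𝒢 t
  have hτv𝒢 : ∀ v, v ≤ t → MeasurableSet[𝒢 t] {ω | τ ω ≤ v} := by
    intro v hv
    have h1 : MeasurableSet[MeasurableSpace.comap
        (fun ω => if τ ω ≤ v then (1 : ℝ) else 0) inferInstance] {ω | τ ω ≤ v} := by
      refine ⟨{(1 : ℝ)}, measurableSet_singleton 1, ?_⟩
      ext ω; by_cases h : τ ω ≤ v <;> simp [h]
    have h2 : MeasurableSpace.comap (fun ω => if τ ω ≤ v then (1 : ℝ) else 0)
        inferInstance ≤ 𝒢 t := by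
      rw [h𝒢 t]
      refine le_trans ?_ le_sup_right
      exact le_iSup₂ (f := fun v (_ : v ∈ Set.Iic t) => MeasurableSpace.comap
        (fun ω => if τ ω ≤ v then (1 : ℝ) else 0) inferInstance) v hv
    exact h2 _ h1
  -- the generating π-system
  have hCbase : ∀ B : Set Ω, MeasurableSet[F t] B →
      ∫ ω in B, g ω ∂μ = ∫ ω in B, L ω ∂μ := by
    intro B hB
    have hLsplit : ∀ ω, L ω = Set.indicator {ω | t < τ ω} L ω
        + Set.indicator {ω | t < τ ω}ᶜ L ω := by
      intro ω
      by_cases h : t < τ ω <;> simp [Set.indicator_apply, h]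
    have hIndL : Integrable (Set.indicator {ω | t < τ ω} L) μ := hLint.indicator hset1
    have hInd2 : Integrable (Set.indicator {ω | t < τ ω}ᶜ L) μ := hLint.indicator hset1.compl
    have hcoreg : ∫ ω in B, Set.indicator {ω | t < τ ω} (fun ω => c / G ω) ω ∂μ
        = (ν (Set.Ioi t) * μ (B ∩ D)).toReal := by
      rw [setIntegral_indicator hset1,
        integral_eq_lintegral_of_nonneg_ae
          (Filter.Eventually.of_forall fun ω => div_nonneg hcnn (hGnn ω))
          ((measurable_const.div (hGm.mono hFle le_rfl)).aestronglyMeasurable),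
        E2 B hB]
    have hcoreL : ∫ ω in B, Set.indicator {ω | t < τ ω} L ω ∂μ
        = (ν (Set.Ioi t) * μ (B ∩ D)).toReal := by
      rw [setIntegral_indicator hset1,
        integral_eq_lintegral_of_nonneg_ae
          (Filter.Eventually.of_forall fun ω => inv_nonneg.2 (hppos t (τ ω) ω).le)
          hLint.aestronglyMeasurable.restrict,
        E1 B hB]
    have hR : ∫ ω in B, L ω ∂μ = ∫ ω in B, Set.indicator {ω | t < τ ω} L ω ∂μ
        + ∫ ω in B, Set.indicator {ω | t < τ ω}ᶜ L ω ∂μ := by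
      rw [← integral_add hIndL.integrableOn hInd2.integrableOn]
      exact setIntegral_congr_fun (hFle B hB) fun ω _ => hLsplit ω
    calc ∫ ω in B, g ω ∂μ
        = ∫ ω in B, (Set.indicator {ω | t < τ ω} (fun ω => c / G ω) ω
            + Set.indicator {ω | t < τ ω}ᶜ L ω) ∂μ := by rw [hgsplit]
      _ = ∫ ω in B, Set.indicator {ω | t < τ ω} (fun ω => c / G ω) ω ∂μ
            + ∫ ω in B, Set.indicator {ω | t < τ ω}ᶜ L ω ∂μ :=
          integral_add hInd1.integrableOn hInd2.integrableOn
      _ = ∫ ω in B, L ω ∂μ := by rw [hcoreg, ← hcoreL, ← hR]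
  have heq : ∀ s : Set Ω, MeasurableSet[𝒢 t] s → ∫ ω in s, g ω ∂μ = ∫ ω in s, L ω ∂μ := by
    set P : Set (Set Ω) := {s | ∃ B, MeasurableSet[F t] B ∧
        (s = B ∨ ∃ v, v ≤ t ∧ s = B ∩ {ω | τ ω ≤ v})} with hPdef
    have hPgen : 𝒢 t = MeasurableSpace.generateFrom P := by
      apply le_antisymm
      · rw [h𝒢 t]
        refine sup_le ?_ ?_
        · intro s hs
          exact MeasurableSpace.measurableSet_generateFrom ⟨s, hs, Or.inl rfl⟩
        · refine iSup₂_le fun v hv => ?_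
          have hvset : MeasurableSet[MeasurableSpace.generateFrom P] {ω | τ ω ≤ v} :=
            MeasurableSpace.measurableSet_generateFrom
              ⟨Set.univ, MeasurableSet.univ, Or.inr ⟨v, hv, (Set.univ_inter _).symm⟩⟩
          have : Measurable[MeasurableSpace.generateFrom P]
              (fun ω => if τ ω ≤ v then (1 : ℝ) else 0) :=
            Measurable.ite hvset measurable_const measurable_const
          exact measurable_iff_comap_le.mp this
      · refine MeasurableSpace.generateFrom_le ?_
        rintro s ⟨B, hB, (rfl | ⟨v, hv, rfl⟩)⟩
        · exact hF𝒢 _ hB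
        · exact (hF𝒢 _ hB).inter (hτv𝒢 v hv)
    have hPpi : IsPiSystem P := by
      rintro s ⟨B₁, hB₁, hs⟩ u ⟨B₂, hB₂, hu⟩ -
      rcases hs with hs | ⟨v₁, hv₁, hs⟩ <;> rcases hu with hu | ⟨v₂, hv₂, hu⟩
      · exact ⟨B₁ ∩ B₂, hB₁.inter hB₂, Or.inl (by rw [hs, hu])⟩
      · exact ⟨B₁ ∩ B₂, hB₁.inter hB₂,
          Or.inr ⟨v₂, hv₂, by rw [hs, hu, ← Set.inter_assoc]⟩⟩
      · exact ⟨B₁ ∩ B₂, hB₁.inter hB₂,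
          Or.inr ⟨v₁, hv₁, by rw [hs, hu, Set.inter_right_comm]⟩⟩
      · refine ⟨B₁ ∩ B₂, hB₁.inter hB₂, Or.inr ⟨v₁ ⊓ v₂, le_trans inf_le_left hv₁, ?_⟩⟩
        rw [hs, hu]
        ext ω
        simp only [Set.mem_inter_iff, Set.mem_setOf_eq, le_inf_iff]
        tauto
    intro s hs
    refine @MeasurableSpace.induction_on_inter Ω (𝒢 t)
      (fun s _ => ∫ ω in s, g ω ∂μ = ∫ ω in s, L ω ∂μ) P hPgen hPpi ?_ ?_ ?_ ?_ s hs
    · simp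
    · rintro s ⟨B, hB, (hsB | ⟨v, hv, hsB⟩)⟩
      · rw [hsB]; exact hCbase B hB
      · rw [hsB]
        refine setIntegral_congr_fun ((hFle B hB).inter (hτ measurableSet_Iic)) fun ω hω => ?_
        have hle : ¬ t < τ ω := not_lt.mpr (le_trans hω.2 hv)
        simp [hgdef, hle]
    · intro s hs𝒢 hC
      have hsΩ : MeasurableSet s := h𝒢le s hs𝒢
      have h1 := integral_add_compl hsΩ hIndg
      have h2 := integral_add_compl hsΩ hLint
      have hcu := hCbase Set.univ MeasurableSet.univ
      rw [Measure.restrict_univ] at hcu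
      have := congrArg₂ (· - ·) (h1.trans (hcu.trans h2.symm)) hC
      simpa using this
    · intro f hdisj hmeas𝒢 hC
      have hmeasΩ : ∀ i, MeasurableSet (f i) := fun i => h𝒢le _ (hmeas𝒢 i)
      rw [integral_iUnion hmeasΩ hdisj hIndg.integrableOn,
        integral_iUnion hmeasΩ hdisj hLint.integrableOn]
      exact tsum_congr hC
  -- 𝒢 t measurability of g
  have hmeas' : AEStronglyMeasurable[𝒢 t] g μ := by
    have hset𝒢 : MeasurableSet[𝒢 t] {ω | t < τ ω} := by
      have h1 := (hτv𝒢 t le_rfl).compl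
      have h2 : {ω | τ ω ≤ t}ᶜ = {ω | t < τ ω} := by ext ω; simp [not_le]
      rwa [h2] at h1
    have hmin : Measurable[𝒢 t] fun ω => min (τ ω) t := aux_min_meas τ t hτv𝒢
    have hq : @Measurable Ω (Ω × ℝ≥0) (𝒢 t) ((F t).prod inferInstance)
        (fun ω => (ω, min (τ ω) t)) := Measurable.prodMk (measurable_id'' hF𝒢) hmin
    have hg'meas : Measurable[𝒢 t] (fun ω => if t < τ ω then c / G ω
        else (p t (min (τ ω) t) ω)⁻¹) :=
      Measurable.ite hset𝒢 (measurable_const.div (hGm.mono hF𝒢 le_rfl))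
        ((hpmeas t).comp hq).inv
    refine ⟨fun ω => if t < τ ω then c / G ω else (p t (min (τ ω) t) ω)⁻¹,
      hg'meas.stronglyMeasurable, Filter.Eventually.of_forall fun ω => ?_⟩
    by_cases h : t < τ ω
    · simp [hgdef, hGdef, h]
    · have hmin' : min (τ ω) t = τ ω := min_eq_left (not_lt.mp h)
      simp [hgdef, h, hmin', hLdef]
  haveI : SigmaFinite (μ.trim h𝒢le) := inferInstance
  exact (ae_eq_condExp_of_forall_setIntegral_eq h𝒢le hLint
    (fun s _ _ => hIndg.integrableOn) (fun s hs _ => heq s hs) hmeas').symm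
end

section
/- Under P*, the process M*_t := H_t − ∫_0^{t∧τ} λ*(s) ν(ds), with λ*(t) = 1/G*(t) and G*(t) = P(τ > t), is a (P*, G)-martingale; moreover M* is not a (P*, G^τ)-martingale, but is a bounded variation G^τ-predictable process, hence a (P*, G^τ)-semimartingale with null martingale part. In particular H is not immersed in G^τ under P*. -/
set_option linter.unusedSectionVars false
set_option linter.unusedVariables false
set_option maxHeartbeats 1000000


open MeasureTheory Filter Set
open scoped NNReal ENNReal

/-- The predictable σ-algebra on `ℝ≥0 × Ω` associated with a filtration `F`. -/
def predSigma {Ω : Type*} {mΩ : MeasurableSpace Ω} (F : Filtration ℝ≥0 mΩ) :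
    MeasurableSpace (ℝ≥0 × Ω) :=
  MeasurableSpace.generateFrom
    ({S | ∃ A : Set Ω, MeasurableSet[F 0] A ∧ S = {(0 : ℝ≥0)} ×ˢ A} ∪
     {S | ∃ (a b : ℝ≥0) (A : Set Ω), MeasurableSet[F a] A ∧ S = Set.Ioc a b ×ˢ A})

noncomputable def lamF (ν : Measure ℝ≥0) : ℝ≥0 → ℝ := fun u => ((ν (Set.Ioi u)).toReal)⁻¹

noncomputable def LF (ν : Measure ℝ≥0) : ℝ≥0 → ℝ := fun x => ∫ s in Set.Iic x, lamF ν s ∂ν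

section Basic
variable (ν : Measure ℝ≥0) [IsProbabilityMeasure ν]

lemma measurable_nuIoi : Measurable (fun u : ℝ≥0 => ν (Set.Ioi u)) := by
  have h : Antitone (fun u : ℝ≥0 => ν (Set.Ioi u)) :=
    fun u v huv => measure_mono (Set.Ioi_subset_Ioi huv)
  exact h.measurable

lemma measurable_lamF : Measurable (lamF ν) :=
  ((measurable_nuIoi ν).ennreal_toReal).inv

lemma lamF_nonneg (u : ℝ≥0) : 0 ≤ lamF ν u := inv_nonneg.2 ENNReal.toReal_nonneg

variable (hsupp : ∀ t : ℝ≥0, 0 < ν (Set.Ioi t))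
include hsupp

lemma toReal_pos (u : ℝ≥0) : 0 < (ν (Set.Ioi u)).toReal :=
  ENNReal.toReal_pos (hsupp u).ne' (measure_ne_top ν _)

lemma one_le_lamF (u : ℝ≥0) : 1 ≤ lamF ν u := by
  have h1 : (ν (Set.Ioi u)).toReal ≤ 1 := by
    have := prob_le_one (μ := ν) (s := Set.Ioi u)
    simpa using ENNReal.toReal_mono ENNReal.one_ne_top this
  exact (one_le_inv₀ (toReal_pos ν hsupp u)).2 h1

lemma lamF_pos (u : ℝ≥0) : 0 < lamF ν u := lt_of_lt_of_le one_pos (one_le_lamF ν hsupp u)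

lemma lamF_mono : Monotone (lamF ν) := by
  intro u v huv
  exact inv_anti₀ (toReal_pos ν hsupp v)
    (ENNReal.toReal_mono (measure_ne_top ν _) (measure_mono (Set.Ioi_subset_Ioi huv)))

lemma integrableOn_lamF (b : ℝ≥0) : IntegrableOn (lamF ν) (Set.Iic b) ν := by
  refine Measure.integrableOn_of_bounded (M := lamF ν b) (measure_ne_top ν _)
    ((measurable_lamF ν).aestronglyMeasurable) ?_
  refine (ae_restrict_iff' measurableSet_Iic).2 (ae_of_all _ fun u hu => ?_)
  rw [Real.norm_eq_abs, abs_of_nonneg (lamF_nonneg ν u)]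
  exact lamF_mono ν hsupp hu

lemma LF_nonneg (x : ℝ≥0) : 0 ≤ LF ν x :=
  setIntegral_nonneg measurableSet_Iic fun u _ => lamF_nonneg ν u

lemma LF_mono : Monotone (LF ν) := by
  intro x y hxy
  exact setIntegral_mono_set (integrableOn_lamF ν hsupp y)
    (ae_of_all _ fun u => lamF_nonneg ν u)
    (HasSubset.Subset.eventuallyLE (Set.Iic_subset_Iic.2 hxy))

lemma measurable_LF : Measurable (LF ν) := (LF_mono ν hsupp).measurable

lemma LF_sub {x y : ℝ≥0} (hxy : x ≤ y) :
    LF ν y - LF ν x = ∫ u in Set.Ioc x y, lamF ν u ∂ν := by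
  have hu : Set.Iic x ∪ Set.Ioc x y = Set.Iic y := Set.Iic_union_Ioc_eq_Iic hxy
  have hd : Disjoint (Set.Iic x) (Set.Ioc x y) := Set.Iic_disjoint_Ioc le_rfl
  have := setIntegral_union hd measurableSet_Ioc
    ((integrableOn_lamF ν hsupp y).mono_set (Set.Iic_subset_Iic.2 hxy))
    ((integrableOn_lamF ν hsupp y).mono_set (Set.Ioc_subset_Iic_self))
  rw [LF, LF, ← hu, this]; ring

noncomputable def LamE (ν : Measure ℝ≥0) : ℝ≥0 → ℝ≥0∞ := fun u => (ν (Set.Ioi u))⁻¹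

omit hsupp in
lemma measurable_LamE : Measurable (LamE ν) := (measurable_nuIoi ν).inv

omit hsupp in
lemma lamF_eq (u : ℝ≥0) : lamF ν u = (LamE ν u).toReal := (ENNReal.toReal_inv _).symm

lemma LamE_ne_top (u : ℝ≥0) : LamE ν u ≠ ⊤ := ENNReal.inv_ne_top.2 (hsupp u).ne'

lemma lint_Iic_lt_top (b : ℝ≥0) : ∫⁻ u in Set.Iic b, LamE ν u ∂ν < ⊤ := by
  have h1 : ∫⁻ u in Set.Iic b, LamE ν u ∂ν ≤ ∫⁻ _ in Set.Iic b, LamE ν b ∂ν := by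
    refine setLIntegral_mono (measurable_const) fun u hu => ?_
    exact ENNReal.inv_le_inv.2 (measure_mono (Set.Ioi_subset_Ioi hu))
  refine h1.trans_lt ?_
  rw [setLIntegral_const]
  exact ENNReal.mul_lt_top (lt_top_iff_ne_top.2 (LamE_ne_top ν hsupp b))
    (measure_lt_top ν _)

lemma setIntegral_lamF_eq {A : Set ℝ≥0} :
    ∫ u in A, lamF ν u ∂ν = (∫⁻ u in A, LamE ν u ∂ν).toReal := by
  have h : ∀ u : ℝ≥0, LamE ν u < ⊤ := fun u => lt_top_iff_ne_top.2 (LamE_ne_top ν hsupp u)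
  rw [show lamF ν = fun u => (LamE ν u).toReal from funext (lamF_eq ν)]
  exact integral_toReal ((measurable_LamE ν).aemeasurable) (ae_of_all _ h)

variable [NullSingletonClass ν]

lemma key_b {s t : ℝ≥0} (hst : s ≤ t) :
    ∫ x in Set.Ioi s, (LF ν (min t x) - LF ν s) ∂ν = (ν (Set.Ioc s t)).toReal := by
  classical
  set G : ℝ≥0 → ℝ≥0∞ := fun x => ∫⁻ u, (if s < u ∧ u ≤ t ∧ u ≤ x then LamE ν u else 0) ∂ν
    with hGdef
  have hmeasset : MeasurableSet {p : ℝ≥0 × ℝ≥0 | s < p.2 ∧ p.2 ≤ t ∧ p.2 ≤ p.1} := by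
    have he : {p : ℝ≥0 × ℝ≥0 | s < p.2 ∧ p.2 ≤ t ∧ p.2 ≤ p.1}
        = (Prod.snd ⁻¹' Set.Ioc s t) ∩ {p : ℝ≥0 × ℝ≥0 | p.2 ≤ p.1} := by
      ext p; simp [Set.mem_Ioc]; tauto
    rw [he]
    exact (measurable_snd measurableSet_Ioc).inter
      (measurableSet_le measurable_snd measurable_fst)
  have hFmeas : Measurable
      (Function.uncurry fun x u => if s < u ∧ u ≤ t ∧ u ≤ x then LamE ν u else 0) := by
    have : (Function.uncurry fun x u : ℝ≥0 => if s < u ∧ u ≤ t ∧ u ≤ x then LamE ν u else 0)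
        = fun p : ℝ≥0 × ℝ≥0 => if p ∈ {p : ℝ≥0 × ℝ≥0 | s < p.2 ∧ p.2 ≤ t ∧ p.2 ≤ p.1}
          then LamE ν p.2 else 0 := rfl
    rw [this]
    exact Measurable.ite hmeasset ((measurable_LamE ν).comp measurable_snd) measurable_const
  have hGmeas : Measurable G := hFmeas.lintegral_prod_right
  have hGbound : ∀ x, G x ≤ ∫⁻ u in Set.Iic t, LamE ν u ∂ν := by
    intro x
    rw [hGdef, ← lintegral_indicator measurableSet_Iic]
    refine lintegral_mono fun u => ?_
    rw [Set.indicator_apply]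
    split_ifs with h1 h2
    · exact le_rfl
    · exact absurd h1.2.1 (by simpa [Set.mem_Iic] using h2)
    · exact zero_le
    · exact le_rfl
  have step1 : ∀ x ∈ Set.Ioi s, LF ν (min t x) - LF ν s = (G x).toReal := by
    intro x hx
    rw [Set.mem_Ioi] at hx
    rw [LF_sub ν hsupp (le_min hst hx.le), setIntegral_lamF_eq ν hsupp]
    congr 1
    rw [hGdef, ← lintegral_indicator measurableSet_Ioc]
    congr 1
    funext u
    rw [Set.indicator_apply]
    by_cases hu : u ∈ Set.Ioc s (min t x)
    · have hu' := hu
      rw [Set.mem_Ioc, le_min_iff] at hu'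
      rw [if_pos hu, if_pos ⟨hu'.1, hu'.2.1, hu'.2.2⟩]
    · rw [if_neg hu]
      rw [Set.mem_Ioc, le_min_iff] at hu
      rw [if_neg (by tauto)]
  have step3 : ∫⁻ x in Set.Ioi s, G x ∂ν = ν (Set.Ioc s t) := by
    have e1 : ∫⁻ x in Set.Ioi s, G x ∂ν
        = ∫⁻ x, ∫⁻ u, (if s < x ∧ s < u ∧ u ≤ t ∧ u ≤ x then LamE ν u else 0) ∂ν ∂ν := by
      rw [← lintegral_indicator measurableSet_Ioi]
      congr 1
      funext x
      rw [Set.indicator_apply]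
      split_ifs with hx
      · rw [Set.mem_Ioi] at hx
        refine lintegral_congr fun u => ?_
        have : (s < x ∧ s < u ∧ u ≤ t ∧ u ≤ x) = (s < u ∧ u ≤ t ∧ u ≤ x) := by
          simp [hx]
        simp only [this]
      · rw [Set.mem_Ioi] at hx
        symm
        have : ∀ u, (if s < x ∧ s < u ∧ u ≤ t ∧ u ≤ x then LamE ν u else 0) = 0 :=
          fun u => if_neg fun h => hx h.1
        simp only [this, lintegral_zero]
    have hF2meas : Measurable (Function.uncurry
        fun x u : ℝ≥0 => if s < x ∧ s < u ∧ u ≤ t ∧ u ≤ x then LamE ν u else 0) := by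
      have hset : MeasurableSet {p : ℝ≥0 × ℝ≥0 | s < p.1 ∧ s < p.2 ∧ p.2 ≤ t ∧ p.2 ≤ p.1} := by
        have he : {p : ℝ≥0 × ℝ≥0 | s < p.1 ∧ s < p.2 ∧ p.2 ≤ t ∧ p.2 ≤ p.1}
            = (Prod.fst ⁻¹' Set.Ioi s) ∩ {p : ℝ≥0 × ℝ≥0 | s < p.2 ∧ p.2 ≤ t ∧ p.2 ≤ p.1} := by
          ext p; simp [Set.mem_Ioi]
        rw [he]
        exact (measurable_fst measurableSet_Ioi).inter hmeasset
      exact Measurable.ite hset ((measurable_LamE ν).comp measurable_snd) measurable_const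
    have e2 := lintegral_lintegral_swap (μ := ν) (ν := ν) hF2meas.aemeasurable
    rw [e1, e2]
    have e3 : ∀ u : ℝ≥0,
        (∫⁻ x, (if s < x ∧ s < u ∧ u ≤ t ∧ u ≤ x then LamE ν u else 0) ∂ν)
        = (Set.Ioc s t).indicator (fun _ => 1) u := by
      intro u
      by_cases hu : u ∈ Set.Ioc s t
      · rw [Set.mem_Ioc] at hu
        have hinner : ∀ x, (if s < x ∧ s < u ∧ u ≤ t ∧ u ≤ x then LamE ν u else 0)
            = (Set.Ici u).indicator (fun _ => LamE ν u) x := by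
          intro x
          simp only [Set.indicator_apply, Set.mem_Ici]
          by_cases hx : u ≤ x
          · rw [if_pos ⟨lt_of_lt_of_le hu.1 hx, hu.1, hu.2, hx⟩, if_pos hx]
          · rw [if_neg (by tauto), if_neg hx]
        simp only [hinner]
        rw [lintegral_indicator measurableSet_Ici, setLIntegral_const]
        have : ν (Set.Ici u) = ν (Set.Ioi u) := (measure_congr (Ioi_ae_eq_Ici (a := u))).symm
        rw [this, LamE, ENNReal.inv_mul_cancel (hsupp u).ne' (measure_ne_top ν _)]
        rw [Set.indicator_of_mem (by rw [Set.mem_Ioc]; exact hu)]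
      · rw [Set.mem_Ioc] at hu
        have : ∀ x, (if s < x ∧ s < u ∧ u ≤ t ∧ u ≤ x then LamE ν u else 0) = 0 :=
          fun x => if_neg (by tauto)
        simp only [this, lintegral_zero]
        rw [Set.indicator_of_notMem (by rw [Set.mem_Ioc]; exact hu)]
    simp only [e3]
    rw [lintegral_indicator measurableSet_Ioc, setLIntegral_one]
  rw [setIntegral_congr_fun measurableSet_Ioi step1]
  rw [integral_toReal (hGmeas.aemeasurable.restrict)
    (ae_of_all _ fun x => (hGbound x).trans_lt (lint_Iic_lt_top ν hsupp t))]
  rw [step3]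

lemma key_a (s t : ℝ≥0) :
    ∫ x in Set.Ioi s, (if x ≤ t then (1:ℝ) else 0) ∂ν = (ν (Set.Ioc s t)).toReal := by
  have h : (fun x : ℝ≥0 => if x ≤ t then (1:ℝ) else 0)
      = (Set.Iic t).indicator (fun _ => (1:ℝ)) := by
    funext x; rw [Set.indicator_apply]; simp [Set.mem_Iic]
  rw [h, setIntegral_indicator measurableSet_Iic, Set.Ioi_inter_Iic, setIntegral_const]
  simp [Measure.real]

end Basic

noncomputable def kD (ν : Measure ℝ≥0) (s t : ℝ≥0) : ℝ≥0 → ℝ := fun x =>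
  ((if x ≤ t then (1:ℝ) else 0) - LF ν (min t x))
    - ((if x ≤ s then (1:ℝ) else 0) - LF ν (min s x))

lemma integrable_of_bound {α : Type*} {m : MeasurableSpace α} (μ : Measure α)
    [IsFiniteMeasure μ] (f : α → ℝ) (C : ℝ) (hf : AEStronglyMeasurable f μ)
    (hb : ∀ a, |f a| ≤ C) : Integrable f μ :=
  Integrable.mono' (integrable_const C) hf
    (ae_of_all _ fun a => by simpa [Real.norm_eq_abs] using hb a)

section Basic2
variable (ν : Measure ℝ≥0) [IsProbabilityMeasure ν]
variable (hsupp : ∀ t : ℝ≥0, 0 < ν (Set.Ioi t))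
include hsupp

lemma measurable_kD (s t : ℝ≥0) : Measurable (kD ν s t) := by
  have hmin : ∀ r : ℝ≥0, Measurable fun x : ℝ≥0 => min r x :=
    fun r => measurable_const.min measurable_id
  have hχ : ∀ r : ℝ≥0, Measurable fun x : ℝ≥0 => if x ≤ r then (1:ℝ) else 0 := by
    intro r
    exact Measurable.ite (measurableSet_Iic : MeasurableSet (Set.Iic r))
      measurable_const measurable_const
  exact (((hχ t).sub ((measurable_LF ν hsupp).comp (hmin t)))).sub
    (((hχ s).sub ((measurable_LF ν hsupp).comp (hmin s))))

lemma piece_bound (r x : ℝ≥0) :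
    |(if x ≤ r then (1:ℝ) else 0) - LF ν (min r x)| ≤ 1 + LF ν r := by
  have h0 : 0 ≤ LF ν (min r x) := LF_nonneg ν hsupp _
  have hle : LF ν (min r x) ≤ LF ν r := LF_mono ν hsupp (min_le_left _ _)
  have hχ : |if x ≤ r then (1:ℝ) else 0| ≤ 1 := by split_ifs <;> simp
  calc |(if x ≤ r then (1:ℝ) else 0) - LF ν (min r x)|
      ≤ |if x ≤ r then (1:ℝ) else 0| + |LF ν (min r x)| := abs_sub _ _
    _ ≤ 1 + LF ν r := by rw [abs_of_nonneg h0]; exact add_le_add hχ hle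

lemma kD_bound {s t : ℝ≥0} (hst : s ≤ t) (x : ℝ≥0) :
    |kD ν s t x| ≤ 2 + 2 * LF ν t := by
  have h1 := piece_bound ν hsupp t x
  have h2 := piece_bound ν hsupp s x
  have h3 : LF ν s ≤ LF ν t := LF_mono ν hsupp hst
  calc |kD ν s t x| ≤ |(if x ≤ t then (1:ℝ) else 0) - LF ν (min t x)|
        + |(if x ≤ s then (1:ℝ) else 0) - LF ν (min s x)| := abs_sub _ _
    _ ≤ 2 + 2 * LF ν t := by linarith

variable [NullSingletonClass ν]

lemma kD_integral_zero {s t : ℝ≥0} (hst : s ≤ t) : ∫ x, kD ν s t x ∂ν = 0 := by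
  have hint : Integrable (kD ν s t) ν :=
    integrable_of_bound ν _ _ ((measurable_kD ν hsupp s t).aestronglyMeasurable)
      (kD_bound ν hsupp hst)
  have hsplit := integral_add_compl (measurableSet_Iic (a := s)) hint
  rw [Set.compl_Iic] at hsplit
  have h0 : ∫ x in Set.Iic s, kD ν s t x ∂ν = 0 := by
    rw [setIntegral_congr_fun measurableSet_Iic (g := fun _ => (0:ℝ))
      (fun x hx => by
        rw [Set.mem_Iic] at hx
        unfold kD
        rw [min_eq_right (hx.trans hst), min_eq_right hx, if_pos (hx.trans hst), if_pos hx]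
        ring)]
    exact integral_zero _ _
  have hIoi : ∫ x in Set.Ioi s, kD ν s t x ∂ν = 0 := by
    have he : ∀ x ∈ Set.Ioi s,
        kD ν s t x = (if x ≤ t then (1:ℝ) else 0) - (LF ν (min t x) - LF ν s) := by
      intro x hx; rw [Set.mem_Ioi] at hx
      unfold kD
      rw [min_eq_left hx.le, if_neg (not_le.2 hx)]
      ring
    rw [setIntegral_congr_fun measurableSet_Ioi he]
    have i1 : Integrable (fun x : ℝ≥0 => if x ≤ t then (1:ℝ) else 0) (ν.restrict (Set.Ioi s)) :=
      integrable_of_bound _ _ 1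
        ((Measurable.ite (measurableSet_Iic : MeasurableSet (Set.Iic t)) measurable_const
          measurable_const).aestronglyMeasurable)
        (fun x => by split_ifs <;> simp)
    have i2 : Integrable (fun x : ℝ≥0 => LF ν (min t x) - LF ν s) (ν.restrict (Set.Ioi s)) := by
      refine integrable_of_bound _ _ (LF ν t)
        ((((measurable_LF ν hsupp).comp (measurable_const.min measurable_id)).sub
          measurable_const).aestronglyMeasurable) (fun x => ?_)
      have h0' : 0 ≤ LF ν (min t x) := LF_nonneg ν hsupp _
      have h1' : LF ν (min t x) ≤ LF ν t := LF_mono ν hsupp (min_le_left _ _)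
      have h2' : 0 ≤ LF ν s := LF_nonneg ν hsupp _
      have h3' : LF ν s ≤ LF ν t := LF_mono ν hsupp hst
      rw [abs_le]; constructor <;> linarith
    rw [integral_sub i1 i2, key_a ν hsupp s t, key_b ν hsupp hst, sub_self]
  rw [← hsplit, h0, hIoi, add_zero]

lemma LF_zero : LF ν 0 = 0 := by
  have h1 : Set.Iic (0:ℝ≥0) = {0} := by ext x; simp [le_zero_iff]
  have h2 : ν (Set.Iic 0) = 0 := by rw [h1]; exact measure_singleton 0
  rw [LF, Measure.restrict_eq_zero.2 h2, integral_zero_measure]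

lemma exists_LF_pos : ∃ t : ℝ≥0, 0 < LF ν t := by
  have hex : ∃ t : ℝ≥0, 0 < ν (Set.Iic t) := by
    by_contra h
    push_neg at h
    have h0 : ∀ t : ℝ≥0, ν (Set.Iic t) = 0 := fun t => le_antisymm (h t) (zero_le)
    have huniv : (Set.univ : Set ℝ≥0) = ⋃ n : ℕ, Set.Iic (n : ℝ≥0) := by
      ext x
      simp only [Set.mem_univ, Set.mem_iUnion, Set.mem_Iic, true_iff]
      exact exists_nat_ge x
    have h1 : ν Set.univ = 0 := by rw [huniv]; exact measure_iUnion_null fun n => h0 _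
    simp [measure_univ] at h1
  obtain ⟨t, ht⟩ := hex
  refine ⟨t, ?_⟩
  have h1 : ∫ _ in Set.Iic t, (1:ℝ) ∂ν ≤ ∫ x in Set.Iic t, lamF ν x ∂ν :=
    setIntegral_mono_on (integrable_const 1).integrableOn (integrableOn_lamF ν hsupp t)
      measurableSet_Iic (fun x _ => one_le_lamF ν hsupp x)
  have h2 : 0 < (ν (Set.Iic t)).toReal := ENNReal.toReal_pos ht.ne' (measure_ne_top ν _)
  rw [setIntegral_const] at h1
  simp only [smul_eq_mul, mul_one] at h1
  exact lt_of_lt_of_le h2 h1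

end Basic2

lemma bv_sub {f g : ℝ≥0 → ℝ} (hf : Monotone f) (hg : Monotone g) (t : ℝ≥0) :
    BoundedVariationOn (fun s => f s - g s) (Set.Iic t) := by
  have hIic : Set.Iic t ∩ Set.Icc 0 t = Set.Iic t :=
    Set.inter_eq_self_of_subset_left fun x hx => ⟨zero_le, hx⟩
  have hfb : eVariationOn f (Set.Iic t) ≠ ⊤ := by
    have h := (hf.monotoneOn _).eVariationOn_le (a := 0) (b := t)
      (Set.mem_Iic.2 (zero_le)) (Set.mem_Iic.2 le_rfl)
    rw [hIic] at h
    exact (h.trans_lt ENNReal.ofReal_lt_top).ne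
  have hgb : eVariationOn g (Set.Iic t) ≠ ⊤ := by
    have h := (hg.monotoneOn _).eVariationOn_le (a := 0) (b := t)
      (Set.mem_Iic.2 (zero_le)) (Set.mem_Iic.2 le_rfl)
    rw [hIic] at h
    exact (h.trans_lt ENNReal.ofReal_lt_top).ne
  have key : eVariationOn (fun s => f s - g s) (Set.Iic t)
      ≤ eVariationOn f (Set.Iic t) + eVariationOn g (Set.Iic t) := by
    apply iSup_le
    rintro ⟨n, ⟨u, hu, us⟩⟩
    calc (∑ i ∈ Finset.range n,
          edist ((fun s => f s - g s) (u (i+1))) ((fun s => f s - g s) (u i)))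
        ≤ ∑ i ∈ Finset.range n,
          (edist (f (u (i+1))) (f (u i)) + edist (g (u (i+1))) (g (u i))) := by
          refine Finset.sum_le_sum fun i _ => ?_
          simp only [edist_dist]
          rw [← ENNReal.ofReal_add dist_nonneg dist_nonneg]
          exact ENNReal.ofReal_le_ofReal (dist_sub_sub_le _ _ _ _)
      _ = _ := Finset.sum_add_distrib
      _ ≤ eVariationOn f (Set.Iic t) + eVariationOn g (Set.Iic t) :=
          add_le_add (eVariationOn.sum_le (f := f) (n := n) hu us) (eVariationOn.sum_le (f := g) (n := n) hu us)
  exact (key.trans_lt (ENNReal.add_lt_top.2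
    ⟨hfb.lt_top, hgb.lt_top⟩)).ne

section Gen
variable {Ω : Type*} {mΩ : MeasurableSpace Ω}

def genS (F : Filtration ℝ≥0 mΩ) (τ : Ω → ℝ≥0) (i : ℝ≥0) : Set (Set Ω) :=
  {A | ∃ B, MeasurableSet[F i] B ∧ (A = B ∨ ∃ v, v ≤ i ∧ A = B ∩ {ω | τ ω ≤ v})}

lemma isPiSystem_genS (F : Filtration ℝ≥0 mΩ) (τ : Ω → ℝ≥0) (i : ℝ≥0) :
    IsPiSystem (genS F τ i) := by
  rintro A ⟨B, hB, hA⟩ A' ⟨B', hB', hA'⟩ -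
  rcases hA with rfl | ⟨v, hv, rfl⟩ <;> rcases hA' with rfl | ⟨v', hv', rfl⟩
  · exact ⟨A ∩ A', hB.inter hB', Or.inl rfl⟩
  · exact ⟨A ∩ B', hB.inter hB', Or.inr ⟨v', hv', (Set.inter_assoc _ _ _).symm⟩⟩
  · refine ⟨B ∩ A', hB.inter hB', Or.inr ⟨v, hv, ?_⟩⟩
    ext ω
    simp only [Set.mem_inter_iff, Set.mem_setOf_eq]
    tauto
  · refine ⟨B ∩ B', hB.inter hB', Or.inr ⟨min v v', le_trans (min_le_left _ _) hv, ?_⟩⟩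
    ext ω
    simp only [Set.mem_inter_iff, Set.mem_setOf_eq, le_min_iff]
    tauto

lemma mem_genS_self (F : Filtration ℝ≥0 mΩ) (τ : Ω → ℝ≥0) (i : ℝ≥0) {B : Set Ω}
    (hB : MeasurableSet[F i] B) : B ∈ genS F τ i := ⟨B, hB, Or.inl rfl⟩

lemma mem_genS_tau (F : Filtration ℝ≥0 mΩ) (τ : Ω → ℝ≥0) (i : ℝ≥0) {v : ℝ≥0} (hv : v ≤ i) :
    {ω | τ ω ≤ v} ∈ genS F τ i :=
  ⟨Set.univ, MeasurableSet.univ, Or.inr ⟨v, hv, (Set.univ_inter _).symm⟩⟩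

lemma indicator_preimage_cases (τ : Ω → ℝ≥0) (v : ℝ≥0) (E : Set ℝ) :
    (fun ω => if τ ω ≤ v then (1:ℝ) else 0) ⁻¹' E = ∅ ∨
    (fun ω => if τ ω ≤ v then (1:ℝ) else 0) ⁻¹' E = {ω | τ ω ≤ v} ∨
    (fun ω => if τ ω ≤ v then (1:ℝ) else 0) ⁻¹' E = {ω | τ ω ≤ v}ᶜ ∨
    (fun ω => if τ ω ≤ v then (1:ℝ) else 0) ⁻¹' E = Set.univ := by
  by_cases h1 : (1:ℝ) ∈ E <;> by_cases h0 : (0:ℝ) ∈ E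
  · refine Or.inr (Or.inr (Or.inr ?_))
    ext ω; simp only [Set.mem_preimage, Set.mem_univ, iff_true]
    split_ifs <;> assumption
  · refine Or.inr (Or.inl ?_)
    ext ω; simp only [Set.mem_preimage, Set.mem_setOf_eq]
    split_ifs with h <;> simp [h, h1, h0]
  · refine Or.inr (Or.inr (Or.inl ?_))
    ext ω; simp only [Set.mem_preimage, Set.mem_compl_iff, Set.mem_setOf_eq]
    split_ifs with h <;> simp [h, h1, h0]
  · refine Or.inl ?_
    ext ω; simp only [Set.mem_preimage, Set.mem_empty_iff_false, iff_false]
    split_ifs <;> assumption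

lemma gen_eq (F : Filtration ℝ≥0 mΩ) (τ : Ω → ℝ≥0) (i : ℝ≥0) :
    (F i ⊔ ⨆ v ∈ Set.Iic i,
        MeasurableSpace.comap (fun ω => if τ ω ≤ v then (1 : ℝ) else 0) inferInstance
      : MeasurableSpace Ω)
    = MeasurableSpace.generateFrom (genS F τ i) := by
  apply le_antisymm
  · refine sup_le ?_ ?_
    · intro A hA
      exact MeasurableSpace.measurableSet_generateFrom (mem_genS_self F τ i hA)
    · refine iSup_le fun v => iSup_le fun hv => ?_
      rw [Set.mem_Iic] at hv
      rintro A ⟨E, -, rfl⟩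
      rcases indicator_preimage_cases τ v E with h | h | h | h <;> rw [h]
      · exact @MeasurableSet.empty Ω (MeasurableSpace.generateFrom (genS F τ i))
      · exact MeasurableSpace.measurableSet_generateFrom (mem_genS_tau F τ i hv)
      · exact (MeasurableSpace.measurableSet_generateFrom (mem_genS_tau F τ i hv)).compl
      · exact @MeasurableSet.univ Ω (MeasurableSpace.generateFrom (genS F τ i))
  · refine MeasurableSpace.generateFrom_le ?_
    rintro A ⟨B, hB, hA⟩
    have hBmem : MeasurableSet[(F i ⊔ ⨆ v ∈ Set.Iic i,
        MeasurableSpace.comap (fun ω => if τ ω ≤ v then (1 : ℝ) else 0) inferInstance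
        : MeasurableSpace Ω)] B :=
      (le_sup_left : (F i : MeasurableSpace Ω) ≤ _) B hB
    have htau : ∀ v : ℝ≥0, v ≤ i → MeasurableSet[(F i ⊔ ⨆ v ∈ Set.Iic i,
        MeasurableSpace.comap (fun ω => if τ ω ≤ v then (1 : ℝ) else 0) inferInstance
        : MeasurableSpace Ω)] {ω | τ ω ≤ v} := by
      intro v hv
      have hle : MeasurableSpace.comap (fun ω => if τ ω ≤ v then (1 : ℝ) else 0) inferInstance
          ≤ (F i ⊔ ⨆ v ∈ Set.Iic i,
            MeasurableSpace.comap (fun ω => if τ ω ≤ v then (1 : ℝ) else 0) inferInstance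
            : MeasurableSpace Ω) := by
        refine le_trans ?_ le_sup_right
        exact le_iSup₂ (f := fun (v : ℝ≥0) (_ : v ∈ Set.Iic i) =>
          MeasurableSpace.comap (fun ω => if τ ω ≤ v then (1 : ℝ) else 0) inferInstance)
          v (Set.mem_Iic.2 hv)
      refine hle _ ⟨{(1:ℝ)}, measurableSet_singleton 1, ?_⟩
      ext ω
      simp only [Set.mem_preimage, Set.mem_singleton_iff, Set.mem_setOf_eq]
      split_ifs with h <;> simp [h]
    rcases hA with rfl | ⟨v, hv, rfl⟩
    · exact hBmem
    · exact hBmem.inter (htau v hv)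

end Gen

lemma measurable_to_nnreal_of_Iic {α : Type*} {m : MeasurableSpace α} (f : α → ℝ≥0)
    (h : ∀ v, MeasurableSet[m] (f ⁻¹' Set.Iic v)) : Measurable[m] f := by
  have hb : (borel ℝ≥0) = MeasurableSpace.generateFrom (Set.range Set.Iic) :=
    borel_eq_generateFrom_Iic ℝ≥0
  have h2 : @Measurable α ℝ≥0 m (MeasurableSpace.generateFrom (Set.range Set.Iic)) f :=
    measurable_generateFrom (by rintro _ ⟨v, rfl⟩; exact h v)
  rwa [← hb, ← BorelSpace.measurable_eq (α := ℝ≥0)] at h2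

lemma measurable_min_tau {Ω : Type*} (τ : Ω → ℝ≥0) {m : MeasurableSpace Ω} (r : ℝ≥0)
    (h : ∀ v : ℝ≥0, v ≤ r → MeasurableSet[m] {ω | τ ω ≤ v}) :
    Measurable[m] (fun ω => min r (τ ω)) := by
  refine measurable_to_nnreal_of_Iic _ fun v => ?_
  by_cases hrv : r ≤ v
  · have : (fun ω => min r (τ ω)) ⁻¹' Set.Iic v = Set.univ := by
      ext ω
      simp only [Set.mem_preimage, Set.mem_Iic, Set.mem_univ, iff_true]
      exact le_trans (min_le_left _ _) hrv
    rw [this]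
    exact MeasurableSet.univ
  · have : (fun ω => min r (τ ω)) ⁻¹' Set.Iic v = {ω | τ ω ≤ v} := by
      ext ω
      simp only [Set.mem_preimage, Set.mem_Iic, Set.mem_setOf_eq, min_le_iff]
      exact ⟨fun hor => hor.resolve_left hrv, fun hτ => Or.inr hτ⟩
    rw [this]
    exact h v (le_of_lt (not_le.1 hrv))

lemma tau_le_mem_iSup {Ω : Type*} (τ : Ω → ℝ≥0) (r : ℝ≥0) {v : ℝ≥0} (hv : v ≤ r) :
    MeasurableSet[⨆ w ∈ Set.Iic r,
      MeasurableSpace.comap (fun ω => if τ ω ≤ w then (1:ℝ) else 0) inferInstance]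
      {ω | τ ω ≤ v} := by
  have hle : MeasurableSpace.comap (fun ω => if τ ω ≤ v then (1 : ℝ) else 0) inferInstance
      ≤ ⨆ w ∈ Set.Iic r,
        MeasurableSpace.comap (fun ω => if τ ω ≤ w then (1 : ℝ) else 0) inferInstance :=
    le_iSup₂ (f := fun (w : ℝ≥0) (_ : w ∈ Set.Iic r) =>
      MeasurableSpace.comap (fun ω => if τ ω ≤ w then (1 : ℝ) else 0) inferInstance)
      v (Set.mem_Iic.2 hv)
  refine hle _ ⟨{(1:ℝ)}, measurableSet_singleton 1, ?_⟩
  ext ω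
  simp only [Set.mem_preimage, Set.mem_singleton_iff, Set.mem_setOf_eq]
  split_ifs with h <;> simp [h]

lemma indep_setIntegral {Ω : Type*} {mΩ : MeasurableSpace Ω} (μs : Measure Ω)
    [IsProbabilityMeasure μs] (mF : MeasurableSpace Ω) (hmF : mF ≤ mΩ)
    (τ : Ω → ℝ≥0) (hτ : Measurable[mΩ] τ)
    (hindep : ProbabilityTheory.Indep (MeasurableSpace.comap τ inferInstance) mF μs)
    (k : ℝ≥0 → ℝ) (hk : Measurable k) (hkint : Integrable (fun ω => k (τ ω)) μs)
    (B : Set Ω) (hB : MeasurableSet[mF] B) :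
    ∫ ω in B, k (τ ω) ∂μs = (μs B).toReal * ∫ ω, k (τ ω) ∂μs := by
  have hBm : MeasurableSet[mΩ] B := hmF B hB
  have hIF : ProbabilityTheory.IndepFun (fun ω => k (τ ω))
      (B.indicator fun _ => (1:ℝ)) μs := by
    rw [ProbabilityTheory.IndepFun_iff]
    intro t1 t2 ht1 ht2
    refine (ProbabilityTheory.Indep_iff _ _ _).1 hindep t1 t2 ?_ ?_
    · obtain ⟨E, hE, rfl⟩ := ht1
      exact ⟨k ⁻¹' E, hk hE, rfl⟩
    · obtain ⟨E, hE, rfl⟩ := ht2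
      by_cases h1 : (1:ℝ) ∈ E <;> by_cases h0 : (0:ℝ) ∈ E
      · have he : (B.indicator fun _ => (1:ℝ)) ⁻¹' E = Set.univ := by
          ext ω
          by_cases hω : ω ∈ B <;> simp [hω, h1, h0]
        rw [he]
        exact @MeasurableSet.univ Ω mF
      · have he : (B.indicator fun _ => (1:ℝ)) ⁻¹' E = B := by
          ext ω
          by_cases hω : ω ∈ B <;> simp [hω, h1, h0]
        rw [he]; exact hB
      · have he : (B.indicator fun _ => (1:ℝ)) ⁻¹' E = Bᶜ := by
          ext ω
          by_cases hω : ω ∈ B <;> simp [hω, h1, h0]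
        rw [he]; exact hB.compl
      · have he : (B.indicator fun _ => (1:ℝ)) ⁻¹' E = ∅ := by
          ext ω
          by_cases hω : ω ∈ B <;> simp [hω, h1, h0]
        rw [he]
        exact @MeasurableSet.empty Ω mF
  clear hindep hB hmF hτ
  clear mF
  have hprod : (fun ω => k (τ ω)) * (B.indicator fun _ => (1:ℝ))
      = B.indicator (fun ω => k (τ ω)) := by
    funext ω
    by_cases hω : ω ∈ B <;> simp [hω]
  have hmul := ProbabilityTheory.IndepFun.integral_mul_eq_mul_integral hIF hkint.aestronglyMeasurable
    ((integrable_const (1:ℝ)).indicator hBm).aestronglyMeasurable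
  calc ∫ ω in B, k (τ ω) ∂μs = ∫ ω, B.indicator (fun ω => k (τ ω)) ω ∂μs :=
        (integral_indicator hBm).symm
    _ = ∫ ω, ((fun ω => k (τ ω)) * (B.indicator fun _ => (1:ℝ))) ω ∂μs := by rw [hprod]
    _ = (∫ ω, k (τ ω) ∂μs) * ∫ ω, (B.indicator fun _ => (1:ℝ)) ω ∂μs := hmul
    _ = (μs B).toReal * ∫ ω, k (τ ω) ∂μs := by
        rw [integral_indicator_const (1:ℝ) hBm]
        simp only [smul_eq_mul, mul_one, Measure.real]
        ring

/-- Under `P*`, the process `M*_t = H_t − ∫_0^{t∧τ} λ*(s) ν(ds)`, with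
`λ*(t) = 1/G*(t)`, `G*(t) = P(τ > t)`, is a `(P*, G)`-martingale; it is not a
`(P*, G^τ)`-martingale but is a bounded-variation `G^τ`-predictable process (hence a
`(P*, G^τ)`-semimartingale with null martingale part); in particular `H` is not immersed
in `G^τ` under `P*`. -/
theorem stmt16 {Ω : Type*} {mΩ : MeasurableSpace Ω} (μ μs : Measure Ω)
    [IsProbabilityMeasure μ] [IsProbabilityMeasure μs]
    (F : Filtration ℝ≥0 mΩ) (τ : Ω → ℝ≥0) (hτ : Measurable τ)
    (ν : Measure ℝ≥0) (hν : ν = μ.map τ) (hνs : ν = μs.map τ)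
    [NullSingletonClass ν] (hsupp : ∀ t : ℝ≥0, 0 < ν (Set.Ioi t))
    (hindep : ProbabilityTheory.Indep
      (MeasurableSpace.comap τ inferInstance) (⨆ t, (F t : MeasurableSpace Ω)) μs)
    (hagreeF : ∀ t, ∀ s : Set Ω, MeasurableSet[F t] s → μs s = μ s)
    (𝒢 : Filtration ℝ≥0 mΩ)
    (h𝒢 : ∀ r, 𝒢 r = F r ⊔ ⨆ v ∈ Set.Iic r,
      MeasurableSpace.comap (fun ω => if τ ω ≤ v then (1 : ℝ) else 0) inferInstance)
    (𝒢τ : Filtration ℝ≥0 mΩ)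
    (h𝒢τ : ∀ r, 𝒢τ r = F r ⊔ MeasurableSpace.comap τ inferInstance)
    (ℍ : Filtration ℝ≥0 mΩ)
    (hℍ : ∀ r, (ℍ r : MeasurableSpace Ω) = ⨆ v ∈ Set.Iic r,
      MeasurableSpace.comap (fun ω => if τ ω ≤ v then (1 : ℝ) else 0) inferInstance)
    (Ms : ℝ≥0 → Ω → ℝ)
    (hMs : ∀ t ω, Ms t ω = (if τ ω ≤ t then (1 : ℝ) else 0) -
      ∫ s in Set.Iic (min t (τ ω)), ((ν (Set.Ioi s)).toReal)⁻¹ ∂ν) :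
    Martingale Ms 𝒢 μs ∧
    ¬ Martingale Ms 𝒢τ μs ∧
    (∀ ω, ∀ t, BoundedVariationOn (fun s => Ms s ω) (Set.Iic t)) ∧
    Measurable[predSigma 𝒢τ] (fun q : ℝ≥0 × Ω => Ms q.1 q.2) ∧
    ¬ (∀ Y : ℝ≥0 → Ω → ℝ, Martingale Y ℍ μs → Martingale Y 𝒢τ μs) := by
  haveI : IsProbabilityMeasure ν := by
    rw [hνs]; exact Measure.isProbabilityMeasure_map hτ.aemeasurable
  have hMseq : ∀ u, Ms u = fun ω => (if τ ω ≤ u then (1:ℝ) else 0) - LF ν (min u (τ ω)) := by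
    intro u; funext ω; exact hMs u ω
  have hkDeq : ∀ s t : ℝ≥0, (fun ω => Ms t ω - Ms s ω) = fun ω => kD ν s t (τ ω) := by
    intro s t; funext ω; rw [hMs t ω, hMs s ω]; rfl
  have hHmem : ∀ r, ∀ v : ℝ≥0, v ≤ r → MeasurableSet[ℍ r] {ω | τ ω ≤ v} := by
    intro r v hv
    have h := tau_le_mem_iSup τ r hv
    rwa [← hℍ r] at h
  have hMsMeasH : ∀ r, Measurable[ℍ r] (Ms r) := by
    intro r
    rw [hMseq r]
    have hmin : Measurable[ℍ r] fun ω => min r (τ ω) := measurable_min_tau τ r (hHmem r)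
    have hχ : Measurable[ℍ r] fun ω => if τ ω ≤ r then (1:ℝ) else 0 :=
      Measurable.ite (hHmem r r le_rfl) measurable_const measurable_const
    exact hχ.sub ((measurable_LF ν hsupp).comp hmin)
  have hSMH : ∀ r, StronglyMeasurable[ℍ r] (Ms r) := fun r => (hMsMeasH r).stronglyMeasurable
  have hHle𝒢 : ∀ r, (ℍ r : MeasurableSpace Ω) ≤ 𝒢 r := by
    intro r; rw [hℍ r, h𝒢 r]; exact le_sup_right
  have hSM𝒢 : ∀ r, StronglyMeasurable[𝒢 r] (Ms r) := fun r =>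
    ((hMsMeasH r).mono (hHle𝒢 r) le_rfl).stronglyMeasurable
  have hMsInt : ∀ u, Integrable (Ms u) μs := by
    intro u
    rw [hMseq u]
    refine integrable_of_bound μs _ (1 + LF ν u) ?_ (fun ω => piece_bound ν hsupp u (τ ω))
    refine (Measurable.sub ?_ ?_).aestronglyMeasurable
    · exact Measurable.ite (hτ measurableSet_Iic) measurable_const measurable_const
    · exact (measurable_LF ν hsupp).comp (measurable_const.min hτ)
  have hkDτint : ∀ s t : ℝ≥0, Integrable (fun ω => kD ν s t (τ ω)) μs := by
    intro s t; rw [← hkDeq s t]; exact (hMsInt t).sub (hMsInt s)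
  have hkDτ : ∀ s t : ℝ≥0, s ≤ t → ∫ ω, kD ν s t (τ ω) ∂μs = 0 := by
    intro s t hst
    have h1 : ∫ x, kD ν s t x ∂(μs.map τ) = ∫ ω, kD ν s t (τ ω) ∂μs :=
      integral_map hτ.aemeasurable (measurable_kD ν hsupp s t).aestronglyMeasurable
    rw [← h1, ← hνs]
    exact kD_integral_zero ν hsupp hst
  have hcore : ∀ i j : ℝ≥0, i ≤ j → ∀ A : Set Ω, MeasurableSet[𝒢 i] A →
      ∫ ω in A, (Ms j ω - Ms i ω) ∂μs = 0 := by
    intro i j hij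
    have hDint : Integrable (fun ω => Ms j ω - Ms i ω) μs := (hMsInt j).sub (hMsInt i)
    have hgen : (𝒢 i : MeasurableSpace Ω) = MeasurableSpace.generateFrom (genS F τ i) := by
      rw [h𝒢 i]; exact gen_eq F τ i
    intro A hA
    refine MeasurableSpace.induction_on_inter
      (m := (𝒢 i : MeasurableSpace Ω))
      (C := fun (A : Set Ω) _ => ∫ ω in A, (Ms j ω - Ms i ω) ∂μs = 0)
      hgen (isPiSystem_genS F τ i) ?_ ?_ ?_ ?_ A hA
    · simp
    · rintro A' ⟨B, hB, hA'⟩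
      rcases hA' with rfl | ⟨v, hv, rfl⟩
      · have hBF : MeasurableSet[⨆ t, (F t : MeasurableSpace Ω)] A' :=
          (le_iSup (fun t => (F t : MeasurableSpace Ω)) i) A' hB
        have h1 := indep_setIntegral μs (⨆ t, (F t : MeasurableSpace Ω))
          (iSup_le fun t => F.le t) τ hτ hindep (kD ν i j) (measurable_kD ν hsupp i j)
          (hkDτint i j) A' hBF
        show ∫ ω in A', (Ms j ω - Ms i ω) ∂μs = 0
        calc ∫ ω in A', (Ms j ω - Ms i ω) ∂μs = ∫ ω in A', kD ν i j (τ ω) ∂μs := by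
              rw [hkDeq i j]
          _ = (μs A').toReal * ∫ ω, kD ν i j (τ ω) ∂μs := h1
          _ = 0 := by rw [hkDτ i j hij]; ring
      · show ∫ ω in B ∩ {ω | τ ω ≤ v}, (Ms j ω - Ms i ω) ∂μs = 0
        have hABm : MeasurableSet[mΩ] (B ∩ {ω | τ ω ≤ v}) :=
          ((F.le i) B hB).inter (hτ measurableSet_Iic)
        have heq : Set.EqOn (fun ω => Ms j ω - Ms i ω) (fun _ => (0:ℝ))
            (B ∩ {ω | τ ω ≤ v}) := by
          intro ω hω
          have h1 : τ ω ≤ i := le_trans hω.2 hv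
          have h2 : τ ω ≤ j := le_trans h1 hij
          simp only
          rw [hMs j ω, hMs i ω, if_pos h1, if_pos h2, min_eq_right h1, min_eq_right h2]
          ring
        rw [setIntegral_congr_fun hABm heq, integral_zero]
    · intro A' hA'm hA'0
      have hAm : MeasurableSet[mΩ] A' := (𝒢.le i) A' hA'm
      have hadd := integral_add_compl hAm hDint
      have huniv : ∫ ω, (Ms j ω - Ms i ω) ∂μs = 0 := by
        rw [hkDeq i j]; exact hkDτ i j hij
      show ∫ ω in A'ᶜ, (Ms j ω - Ms i ω) ∂μs = 0
      have hA'0' : ∫ ω in A', (Ms j ω - Ms i ω) ∂μs = 0 := hA'0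
      linarith
    · intro f hdisj hfm hf0
      show ∫ ω in ⋃ n, f n, (Ms j ω - Ms i ω) ∂μs = 0
      rw [integral_iUnion (fun n => (𝒢.le i) _ (hfm n)) hdisj hDint.integrableOn]
      have : ∀ n, ∫ ω in f n, (Ms j ω - Ms i ω) ∂μs = 0 := fun n => hf0 n
      simp only [this, tsum_zero]
  have mart𝒢 : Martingale Ms 𝒢 μs := by
    constructor
    · exact fun r => hSM𝒢 r
    · intro i j hij
      refine (ae_eq_condExp_of_forall_setIntegral_eq (𝒢.le i) (hMsInt j)
        (fun s _ _ => (hMsInt i).integrableOn) (fun s hs _ => ?_)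
        ((hSM𝒢 i).aestronglyMeasurable)).symm
      have h := hcore i j hij s hs
      rw [integral_sub ((hMsInt j).integrableOn) ((hMsInt i).integrableOn)] at h
      linarith
  have martH : Martingale Ms ℍ μs := by
    constructor
    · exact fun r => hSMH r
    · intro i j hij
      have h1 := condExp_condExp_of_le (hHle𝒢 i) (𝒢.le i) (f := Ms j) (μ := μs)
      have h2 : μs[μs[Ms j|𝒢 i]|ℍ i] =ᵐ[μs] μs[Ms i|ℍ i] := condExp_congr_ae (mart𝒢.2 i j hij)
      have h3 : μs[Ms i|ℍ i] = Ms i :=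
        condExp_of_stronglyMeasurable (ℍ.le i) (hSMH i) (hMsInt i)
      exact h1.symm.trans (h2.trans (by rw [h3]))
  have hcomap𝒢τ : MeasurableSpace.comap τ inferInstance ≤ (𝒢τ 0 : MeasurableSpace Ω) := by
    rw [h𝒢τ 0]; exact le_sup_right
  have notMart : ¬ Martingale Ms 𝒢τ μs := by
    obtain ⟨t0, ht0⟩ := exists_LF_pos ν hsupp
    intro hM
    have hsm : StronglyMeasurable[𝒢τ 0] (Ms t0) := by
      rw [hMseq t0]
      have hcom : Measurable[MeasurableSpace.comap τ inferInstance] τ :=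
        measurable_iff_comap_le.mpr le_rfl
      have hk : Measurable fun x : ℝ≥0 => (if x ≤ t0 then (1:ℝ) else 0) - LF ν (min t0 x) := by
        refine Measurable.sub ?_ ?_
        · exact Measurable.ite (measurableSet_Iic : MeasurableSet (Set.Iic t0))
            measurable_const measurable_const
        · exact (measurable_LF ν hsupp).comp (measurable_const.min measurable_id)
      have h5 : Measurable[MeasurableSpace.comap τ inferInstance]
          fun ω => (if τ ω ≤ t0 then (1:ℝ) else 0) - LF ν (min t0 (τ ω)) := hk.comp hcom
      exact (h5.mono hcomap𝒢τ le_rfl).stronglyMeasurable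
    have h2 := hM.2 0 t0 (zero_le)
    rw [condExp_of_stronglyMeasurable (𝒢τ.le 0) hsm (hMsInt t0)] at h2
    have hAm : MeasurableSet (τ ⁻¹' Set.Ioi t0) := hτ measurableSet_Ioi
    have hL : ∫ ω in τ ⁻¹' Set.Ioi t0, Ms t0 ω ∂μs
        = (μs (τ ⁻¹' Set.Ioi t0)).toReal * (- LF ν t0) := by
      rw [setIntegral_congr_fun hAm (g := fun _ => - LF ν t0) (fun ω hω => by
        have hω' : t0 < τ ω := hω
        rw [hMs t0 ω, if_neg (not_le.2 hω'), min_eq_left (le_of_lt hω'), zero_sub]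
        rfl), setIntegral_const]
      simp [smul_eq_mul, Measure.real]
    have hR : ∫ ω in τ ⁻¹' Set.Ioi t0, Ms 0 ω ∂μs = 0 := by
      rw [setIntegral_congr_fun hAm (g := fun _ => (0:ℝ)) (fun ω hω => by
        have hω' : t0 < τ ω := hω
        have hpos : (0:ℝ≥0) < τ ω := lt_of_le_of_lt ((zero_le : (0:ℝ≥0) ≤ t0)) hω'
        rw [hMs 0 ω, if_neg (not_le.2 hpos), min_eq_left (zero_le)]
        have hz : (∫ s in Set.Iic (0:ℝ≥0), ((ν (Set.Ioi s)).toReal)⁻¹ ∂ν) = LF ν 0 := rfl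
        rw [hz, LF_zero ν hsupp]
        ring), integral_zero]
    have hEq : ∫ ω in τ ⁻¹' Set.Ioi t0, Ms t0 ω ∂μs
        = ∫ ω in τ ⁻¹' Set.Ioi t0, Ms 0 ω ∂μs :=
      integral_congr_ae (ae_restrict_of_ae h2)
    have hμA : 0 < (μs (τ ⁻¹' Set.Ioi t0)).toReal := by
      have hmap : μs (τ ⁻¹' Set.Ioi t0) = ν (Set.Ioi t0) := by
        rw [hνs, Measure.map_apply hτ measurableSet_Ioi]
      rw [hmap]
      exact ENNReal.toReal_pos (hsupp t0).ne' (measure_ne_top ν _)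
    rw [hL, hR] at hEq
    nlinarith
  have hBV : ∀ ω, ∀ t, BoundedVariationOn (fun s => Ms s ω) (Set.Iic t) := by
    intro ω t
    have hf : Monotone fun s : ℝ≥0 => if τ ω ≤ s then (1:ℝ) else 0 := by
      intro a b hab
      simp only
      split_ifs with h1 h2
      · exact le_rfl
      · exact absurd (h1.trans hab) h2
      · exact zero_le_one
      · exact le_rfl
    have hg : Monotone fun s : ℝ≥0 => LF ν (min s (τ ω)) :=
      fun a b hab => LF_mono ν hsupp (min_le_min hab le_rfl)
    have he : (fun s => Ms s ω)
        = fun s => (if τ ω ≤ s then (1:ℝ) else 0) - LF ν (min s (τ ω)) :=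
      funext fun s => hMs s ω
    rw [he]
    exact bv_sub hf hg t
  have hpred : Measurable[predSigma 𝒢τ] (fun q : ℝ≥0 × Ω => Ms q.1 q.2) := by
    have hφ1 : Measurable[predSigma 𝒢τ] (fun q : ℝ≥0 × Ω => q.1) := by
      refine measurable_to_nnreal_of_Iic _ fun v => ?_
      have he : (fun q : ℝ≥0 × Ω => q.1) ⁻¹' Set.Iic v
          = ({(0:ℝ≥0)} ×ˢ (Set.univ : Set Ω)) ∪ (Set.Ioc 0 v ×ˢ (Set.univ : Set Ω)) := by
        ext ⟨a, ω⟩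
        simp only [Set.mem_preimage, Set.mem_Iic, Set.mem_union, Set.mem_prod,
          Set.mem_singleton_iff, Set.mem_univ, and_true, Set.mem_Ioc]
        constructor
        · intro hav
          rcases eq_or_lt_of_le ((zero_le : (0:ℝ≥0) ≤ a)) with h | h
          · exact Or.inl h.symm
          · exact Or.inr ⟨h, hav⟩
        · rintro (rfl | ⟨-, hav⟩)
          · exact zero_le
          · exact hav
      rw [he]
      refine MeasurableSet.union ?_ ?_
      · exact MeasurableSpace.measurableSet_generateFrom
          (Or.inl ⟨Set.univ, @MeasurableSet.univ Ω (𝒢τ 0), rfl⟩)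
      · exact MeasurableSpace.measurableSet_generateFrom
          (Or.inr ⟨0, v, Set.univ, @MeasurableSet.univ Ω (𝒢τ 0), rfl⟩)
    have hA0 : ∀ v : ℝ≥0, MeasurableSet[(𝒢τ 0 : MeasurableSpace Ω)] (τ ⁻¹' Set.Iic v) :=
      fun v => hcomap𝒢τ _ ⟨Set.Iic v, measurableSet_Iic, rfl⟩
    have hφ2 : Measurable[predSigma 𝒢τ] (fun q : ℝ≥0 × Ω => τ q.2) := by
      refine measurable_to_nnreal_of_Iic _ fun v => ?_
      have he : (fun q : ℝ≥0 × Ω => τ q.2) ⁻¹' Set.Iic v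
          = ({(0:ℝ≥0)} ×ˢ (τ ⁻¹' Set.Iic v))
            ∪ ⋃ n : ℕ, (Set.Ioc 0 (n:ℝ≥0) ×ˢ (τ ⁻¹' Set.Iic v)) := by
        ext ⟨a, ω⟩
        simp only [Set.mem_preimage, Set.mem_Iic, Set.mem_union, Set.mem_prod,
          Set.mem_singleton_iff, Set.mem_iUnion, Set.mem_Ioc]
        constructor
        · intro hv
          rcases eq_or_lt_of_le ((zero_le : (0:ℝ≥0) ≤ a)) with h | h
          · exact Or.inl ⟨h.symm, hv⟩
          · obtain ⟨n, hn⟩ := exists_nat_ge a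
            exact Or.inr ⟨n, ⟨h, hn⟩, hv⟩
        · rintro (⟨-, hv⟩ | ⟨n, -, hv⟩) <;> exact hv
      rw [he]
      refine MeasurableSet.union ?_ (MeasurableSet.iUnion fun n => ?_)
      · exact MeasurableSpace.measurableSet_generateFrom (Or.inl ⟨_, hA0 v, rfl⟩)
      · exact MeasurableSpace.measurableSet_generateFrom (Or.inr ⟨0, n, _, hA0 v, rfl⟩)
    have hf : Measurable fun p : ℝ≥0 × ℝ≥0 =>
        (if p.2 ≤ p.1 then (1:ℝ) else 0) - LF ν (min p.1 p.2) := by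
      refine Measurable.sub ?_ ?_
      · exact Measurable.ite (measurableSet_le measurable_snd measurable_fst)
          measurable_const measurable_const
      · exact (measurable_LF ν hsupp).comp (measurable_fst.min measurable_snd)
    have he : (fun q : ℝ≥0 × Ω => Ms q.1 q.2)
        = (fun p : ℝ≥0 × ℝ≥0 => (if p.2 ≤ p.1 then (1:ℝ) else 0) - LF ν (min p.1 p.2))
          ∘ (fun q : ℝ≥0 × Ω => (q.1, τ q.2)) :=
      funext fun q => hMs q.1 q.2
    rw [he]
    exact hf.comp (Measurable.prod hφ1 hφ2)
  exact ⟨mart𝒢, notMart, hBV, hpred, fun h => notMart (h Ms martH)⟩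
end
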